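/- arXiv:2510.21231 — 5 statements merged into one kernel-verified Lean document; each statement's English description precedes it below -/
import Mathlib

section
/- For every r ∈ (1,∞) and q̄ ∈ [0,1), the expected revenue of the r-markup mechanism on two values drawn i.i.d. from the normalized triangle distribution T_{q̄} equals G(q̄, r) := (2r / ((1−q̄)(r−1))) · ( (1−q̄)/(1−q̄+q̄r) + ln( r/(1−q̄+q̄r) ) / (1−r) ). In particular, the integral identity 2r · ∫_{q̄r/(1−q̄+q̄r)}^{1} (1−q)/( (1−q̄)·(r − qr + q) ) dq = G(q̄, r) holds. -/
open MeasureTheory Set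

noncomputable section

/-- A two-agent direct mechanism: allocation rule `x` and payment rule `p`. -/
structure TwoMech where
  x : (Fin 2 → ℝ) → Fin 2 → ℝ
  p : (Fin 2 → ℝ) → Fin 2 → ℝ

namespace TwoMech

/-- Feasibility: nonnegative allocations summing to at most one. -/
def Feasible (M : TwoMech) : Prop :=
  ∀ v : Fin 2 → ℝ, (∀ i, 0 ≤ v i) →
    (∀ i, 0 ≤ M.x v i) ∧ M.x v 0 + M.x v 1 ≤ 1

/-- Dominant-strategy incentive compatibility. -/
def DSIC (M : TwoMech) : Prop :=
  ∀ v : Fin 2 → ℝ, (∀ i, 0 ≤ v i) → ∀ i : Fin 2, ∀ z : ℝ, 0 ≤ z →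
    v i * M.x (Function.update v i z) i - M.p (Function.update v i z) i ≤
      v i * M.x v i - M.p v i

/-- Individual rationality. -/
def IR (M : TwoMech) : Prop :=
  ∀ v : Fin 2 → ℝ, (∀ i, 0 ≤ v i) → ∀ i : Fin 2, 0 ≤ v i * M.x v i - M.p v i

/-- A feasible, DSIC and IR mechanism. -/
def Admissible (M : TwoMech) : Prop := M.Feasible ∧ M.DSIC ∧ M.IR

/-- Scale invariance: allocations are invariant and payments scale linearly
under multiplicative rescaling of all values. -/
def ScaleInvariant (M : TwoMech) : Prop :=
  ∀ α : ℝ, 0 < α → ∀ v : Fin 2 → ℝ, (∀ i, 0 ≤ v i) → ∀ i : Fin 2,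
    M.x (fun j => α * v j) i = M.x v i ∧ M.p (fun j => α * v j) i = α * M.p v i

/-- Expected revenue of a mechanism on two i.i.d. draws from `μ`. -/
def rev (M : TwoMech) (μ : Measure ℝ) : ℝ :=
  ∫ v : ℝ × ℝ, (M.p ![v.1, v.2] 0 + M.p ![v.1, v.2] 1) ∂(μ.prod μ)

end TwoMech

/-- Optimal (Bayesian) revenue: supremum of revenue over admissible mechanisms. -/
def OPT (μ : Measure ℝ) : ℝ :=
  sSup {b : ℝ | ∃ M : TwoMech, M.Admissible ∧ M.rev μ = b}

/-- Survival function `Pr[v ≥ t]` of a distribution. -/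
def surv (μ : Measure ℝ) (t : ℝ) : ℝ := (μ {v | t ≤ v}).toReal

/-- The distribution is supported on the nonnegative reals. -/
def NonnegSupport (μ : Measure ℝ) : Prop := μ {v | v < 0} = 0

/-- `t` is in the support of `μ`. -/
def MemSupport (μ : Measure ℝ) (t : ℝ) : Prop :=
  ∀ ε > 0, 0 < μ (Set.Ioo (t - ε) (t + ε))

/-- Regularity: there is a concave function `R` on `[0,1]` with
`R (S t) = t * S t` for all `t` in the support, where `S` is the survival function. -/
def Regular (μ : Measure ℝ) : Prop :=
  ∃ R : ℝ → ℝ, ConcaveOn ℝ (Set.Icc 0 1) R ∧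
    ∀ t, MemSupport μ t → R (surv μ t) = t * surv μ t

/-- Expected revenue of the `r`-markup mechanism on two i.i.d. draws from `μ`:
the revenue is `r * min v₁ v₂` if `max v₁ v₂ ≥ r * min v₁ v₂`, and `0` otherwise.
`markupRev 1 μ` is the second-price auction revenue `E[min v₁ v₂]`. -/
def markupRev (r : ℝ) (μ : Measure ℝ) : ℝ :=
  ∫ v : ℝ × ℝ,
    (if r * min v.1 v.2 ≤ max v.1 v.2 then r * min v.1 v.2 else 0) ∂(μ.prod μ)

/-- Revenue of the stochastic markup mechanism `M_{α,r}`, running the second-price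
auction with probability `α` and the `r`-markup mechanism with probability `1-α`. -/
def mixMarkupRev (α r : ℝ) (μ : Measure ℝ) : ℝ :=
  α * markupRev 1 μ + (1 - α) * markupRev r μ

/-- Revenue of a general stochastic markup mechanism mixing the markup ratio
`r` according to the distribution `ν`. -/
def stochMarkupRev (ν : Measure ℝ) (μ : Measure ℝ) : ℝ :=
  ∫ r, markupRev r μ ∂ν

/-- The normalized triangle distribution `T_q`, with survival function
`1 / (1 + t(1-q))` on `[0, 1/q]` (point mass `q` at `1/q`); for `q = 0` it has
survival function `1/(1+t)` on `[0, ∞)`. -/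
def triangle (q : ℝ) : Measure ℝ :=
  volume.withDensity
    (fun t => ENNReal.ofReal
      (if 0 ≤ t ∧ q * t < 1 then (1 - q) / (1 + t * (1 - q)) ^ 2 else 0))
  + (ENNReal.ofReal q) • Measure.dirac (1 / q)

/-- The normalized quadrilateral distribution `Q_{q,q',r}`, with survival function
`q' / (q' + t r q (1-q'))` for `t < 1/(rq)`,
`q' q (r-1) / (t r q (q'-q) + (r q - q'))` for `1/(rq) ≤ t ≤ 1/q`,
and `0` for `t > 1/q` (point mass `q` at `1/q`). -/
def quadri (q q' r : ℝ) : Measure ℝ :=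
  volume.withDensity
    (fun t => ENNReal.ofReal
      (if 0 ≤ t ∧ t * (r * q) < 1 then
        q' * (r * q) * (1 - q') / (q' + t * (r * q) * (1 - q')) ^ 2
      else if 1 ≤ t * (r * q) ∧ t * q < 1 then
        (q' * q * (r - 1)) * ((r * q) * (q' - q)) /
          ((r * q) * (q' - q) * t + (r * q - q')) ^ 2
      else 0))
  + (ENNReal.ofReal q) • Measure.dirac (1 / q)

/-- `G q r`: closed form for the expected revenue of the `r`-markup mechanism on
two i.i.d. draws from the normalized triangle distribution `T_q`. -/
def G (q r : ℝ) : ℝ :=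
  (2 * r / ((1 - q) * (r - 1))) *
    ((1 - q) / (1 - q + q * r) + Real.log (r / (1 - q + q * r)) / (1 - r))

namespace Stmt5Aux

def dens (q : ℝ) : ℝ → ℝ :=
  fun t => if 0 ≤ t ∧ q * t < 1 then (1 - q) / (1 + t * (1 - q)) ^ 2 else 0

lemma measurable_dens (q : ℝ) : Measurable (dens q) := by
  unfold dens
  apply Measurable.ite
  · exact (measurableSet_le measurable_const measurable_id).inter
      (measurableSet_lt (measurable_const.mul measurable_id) measurable_const)
  · fun_prop
  · exact measurable_const

lemma hasDerivAt_neg_inv (c x : ℝ) (hx : 1 + x * c ≠ 0) :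
    HasDerivAt (fun t : ℝ => -(1 + t * c)⁻¹) (c / (1 + x * c) ^ 2) x := by
  have h1 : HasDerivAt (fun t : ℝ => 1 + t * c) c x := by
    simpa using ((hasDerivAt_id x).mul_const c).const_add 1
  have := (h1.inv hx).neg
  refine this.congr_deriv ?_
  ring

lemma setLintegral_dens (q : ℝ) (hq0 : 0 ≤ q) (hq1 : q < 1) {s : ℝ} (hs : 0 ≤ s)
    (hqs : q * s ≤ 1) :
    ∫⁻ t in Ici s, ENNReal.ofReal (dens q t) =
      ENNReal.ofReal (1 / (1 + s * (1 - q)) - q) := by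
  have hc : (0:ℝ) < 1 - q := by linarith
  have hpos : ∀ x : ℝ, 0 ≤ x → (0:ℝ) < 1 + x * (1 - q) := fun x hx => by nlinarith
  have hderiv : ∀ x : ℝ, 0 ≤ x →
      HasDerivAt (fun t : ℝ => -(1 + t * (1 - q))⁻¹) ((1 - q) / (1 + x * (1 - q)) ^ 2) x :=
    fun x hx => hasDerivAt_neg_inv _ x (hpos x hx).ne'
  rcases eq_or_lt_of_le hq0 with hq | hq
  · -- q = 0
    have h0 : q = 0 := hq.symm
    subst h0
    have hIoi : ∫⁻ t in Ici s, ENNReal.ofReal (dens 0 t) =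
        ∫⁻ t in Ioi s, ENNReal.ofReal ((1 - 0) / (1 + t * (1 - 0)) ^ 2) := by
      rw [← Measure.restrict_congr_set Ioi_ae_eq_Ici]
      refine setLIntegral_congr_fun measurableSet_Ioi ?_
      intro t ht
      have h0t : (0:ℝ) ≤ t := le_trans hs (le_of_lt ht)
      simp [dens, h0t]
    rw [hIoi]
    have htend : Filter.Tendsto (fun t : ℝ => -(1 + t * (1 - 0))⁻¹) Filter.atTop (nhds 0) := by
      have h1 : Filter.Tendsto (fun t : ℝ => 1 + t * (1 - 0)) Filter.atTop Filter.atTop := by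
        exact Filter.tendsto_atTop_add_const_left _ 1
          ((Filter.tendsto_id (α := ℝ)).atTop_mul_const (by norm_num : (0:ℝ) < 1 - 0))
      simpa using (h1.inv_tendsto_atTop).neg
    have hint : IntegrableOn (fun t : ℝ => (1 - 0) / (1 + t * (1 - 0)) ^ 2) (Ioi s) :=
      integrableOn_Ioi_deriv_of_nonneg'
        (fun x hx => hderiv x (le_trans hs hx))
        (fun x hx => le_of_lt (div_pos hc (pow_pos (hpos x (le_trans hs (le_of_lt hx))) 2)))
        htend
    rw [← ofReal_integral_eq_lintegral_ofReal hint
      ((ae_restrict_iff' measurableSet_Ioi).2 (Filter.Eventually.of_forall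
        (fun x hx => le_of_lt (div_pos hc (pow_pos (hpos x (le_trans hs (le_of_lt hx))) 2)))))]
    rw [integral_Ioi_of_hasDerivAt_of_nonneg'
        (fun x hx => hderiv x (le_trans hs hx))
        (fun x hx => le_of_lt (div_pos hc (pow_pos (hpos x (le_trans hs (le_of_lt hx))) 2))) htend]
    norm_num
  · -- q > 0
    set b : ℝ := 1/q with hb
    have hbpos : 0 < b := by positivity
    have hsb : s ≤ b := by
      rw [hb, le_div_iff₀ hq]
      linarith [hqs]
    have hsplit : Ici s = Ico s b ∪ Ici b := (Ico_union_Ici_eq_Ici hsb).symm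
    have hdisj : Disjoint (Ico s b) (Ici b) := by
      refine disjoint_left.mpr fun x hx hx' => ?_
      exact absurd hx.2 (not_lt.mpr hx')
    rw [hsplit, lintegral_union measurableSet_Ici hdisj]
    have hzero : ∫⁻ t in Ici b, ENNReal.ofReal (dens q t) = 0 := by
      rw [setLIntegral_congr_fun measurableSet_Ici (fun t ht => ?_), lintegral_zero]
      have h1 : (1:ℝ) ≤ q * t := by
        rw [hb] at ht
        calc (1:ℝ) = q * (1/q) := by field_simp
        _ ≤ q * t := by exact mul_le_mul_of_nonneg_left ht (le_of_lt hq)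
      simp [dens, not_lt.mpr h1]
    rw [hzero, add_zero]
    have hcong : ∫⁻ t in Ico s b, ENNReal.ofReal (dens q t) =
        ∫⁻ t in Ioc s b, ENNReal.ofReal ((1 - q) / (1 + t * (1 - q)) ^ 2) := by
      rw [setLIntegral_congr_fun measurableSet_Ico (fun t ht => ?_), Measure.restrict_congr_set Ico_ae_eq_Ioc]
      have h0t : (0:ℝ) ≤ t := le_trans hs ht.1
      have hqt : q * t < 1 := by
        rw [hb, lt_div_iff₀ hq] at *
        calc q * t < q * (1/q) := by exact mul_lt_mul_of_pos_left ht.2 hq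
        _ = 1 := by field_simp
      simp [dens, h0t, hqt]
    rw [hcong]
    have hcont : ContinuousOn (fun t : ℝ => (1 - q) / (1 + t * (1 - q)) ^ 2) (Icc s b) := by
      apply ContinuousOn.div continuousOn_const (by fun_prop)
      intro x hx
      exact ne_of_gt (pow_pos (hpos x (le_trans hs hx.1)) 2)
    have hint : IntegrableOn (fun t : ℝ => (1 - q) / (1 + t * (1 - q)) ^ 2) (Ioc s b) :=
      (hcont.integrableOn_Icc).mono_set Ioc_subset_Icc_self
    rw [← ofReal_integral_eq_lintegral_ofReal hint
      ((ae_restrict_iff' measurableSet_Ioc).2 (Filter.Eventually.of_forall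
        (fun x hx => le_of_lt (div_pos hc (pow_pos (hpos x (le_trans hs (le_of_lt hx.1))) 2)))))]
    rw [← intervalIntegral.integral_of_le hsb]
    rw [intervalIntegral.integral_eq_sub_of_hasDerivAt
      (f := fun t : ℝ => -(1 + t * (1 - q))⁻¹)
      (fun x hx => by
        rw [uIcc_of_le hsb] at hx
        exact hderiv x (le_trans hs hx.1))
      (by
        apply ContinuousOn.intervalIntegrable
        rwa [uIcc_of_le hsb])]
    have hbinv : (1 + b * (1 - q))⁻¹ = q := by
      rw [hb]
      rw [inv_eq_iff_eq_inv, eq_comm, inv_eq_iff_eq_inv, eq_comm]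
      field_simp
      ring
    rw [hbinv]
    congr 1
    rw [one_div]
    ring

lemma triangle_eq (q : ℝ) : triangle q =
    volume.withDensity (fun t => ENNReal.ofReal (dens q t))
      + (ENNReal.ofReal q) • Measure.dirac (1 / q) := rfl

lemma triangle_Ici (q : ℝ) (hq0 : 0 ≤ q) (hq1 : q < 1) {s : ℝ} (hs : 0 ≤ s) :
    triangle q (Ici s) =
      ENNReal.ofReal (if q * s ≤ 1 then 1 / (1 + s * (1 - q)) else 0) := by
  rw [triangle_eq, Measure.add_apply, Measure.smul_apply,
    Measure.dirac_apply' _ measurableSet_Ici, withDensity_apply _ measurableSet_Ici]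
  by_cases hqs : q * s ≤ 1
  · rw [if_pos hqs, setLintegral_dens q hq0 hq1 hs hqs]
    rcases eq_or_lt_of_le hq0 with hq | hq
    · have h0 : q = 0 := hq.symm
      subst h0
      simp
    · have hmem : (1/q) ∈ Ici s := by
        rw [mem_Ici, le_div_iff₀ hq]
        linarith [hqs]
      rw [indicator_of_mem hmem]
      simp only [Pi.one_apply, smul_eq_mul, mul_one]
      have hpos : (0:ℝ) < 1 + s * (1 - q) := by nlinarith
      have hsub : (0:ℝ) ≤ 1 / (1 + s * (1 - q)) - q := by
        rw [sub_nonneg, le_div_iff₀ hpos]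
        nlinarith
      rw [← ENNReal.ofReal_add hsub hq0, sub_add_cancel]
  · rw [if_neg hqs]
    push_neg at hqs
    have hq : 0 < q := by
      rcases eq_or_lt_of_le hq0 with hq | hq
      · exfalso; rw [← hq] at hqs; simp at hqs; linarith
      · exact hq
    have hnot : (1/q) ∉ Ici s := by
      rw [mem_Ici, not_le, div_lt_iff₀ hq]
      nlinarith
    rw [indicator_of_notMem hnot]
    have hzero : ∫⁻ t in Ici s, ENNReal.ofReal (dens q t) = 0 := by
      rw [setLIntegral_congr_fun measurableSet_Ici (fun t ht => ?_), lintegral_zero]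
      have h1 : (1:ℝ) ≤ q * t := le_of_lt (lt_of_lt_of_le hqs
        (mul_le_mul_of_nonneg_left ht (le_of_lt hq)))
      simp [dens, not_lt.mpr h1]
    simp [hzero]

lemma triangle_Iio_zero (q : ℝ) (hq0 : 0 ≤ q) (hq1 : q < 1) : triangle q (Iio 0) = 0 := by
  rw [triangle_eq, Measure.add_apply, Measure.smul_apply,
    Measure.dirac_apply' _ measurableSet_Iio, withDensity_apply _ measurableSet_Iio]
  have hzero : ∫⁻ t in Iio 0, ENNReal.ofReal (dens q t) = 0 := by
    rw [setLIntegral_congr_fun measurableSet_Iio (fun t ht => ?_), lintegral_zero]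
    simp only [mem_Iio] at ht
    simp [dens, not_le.mpr ht]
  rw [hzero, zero_add]
  rcases eq_or_lt_of_le hq0 with hq | hq
  · rw [← hq]; simp
  · have hnot : (1/q) ∉ Iio 0 := by
      rw [mem_Iio, not_lt]
      positivity
    rw [indicator_of_notMem hnot]
    simp

lemma triangle_ae_nonneg (q : ℝ) (hq0 : 0 ≤ q) (hq1 : q < 1) :
    ∀ᵐ x ∂(triangle q), 0 ≤ x := by
  rw [ae_iff]
  have : {x : ℝ | ¬ 0 ≤ x} = Iio 0 := by ext x; simp
  rw [this]
  exact triangle_Iio_zero q hq0 hq1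

lemma triangle_prob (q : ℝ) (hq0 : 0 ≤ q) (hq1 : q < 1) :
    IsProbabilityMeasure (triangle q) := by
  constructor
  have : (univ : Set ℝ) = Iio 0 ∪ Ici 0 := (Iio_union_Ici).symm
  rw [this, measure_union (by exact Iio_disjoint_Ici le_rfl) measurableSet_Ici,
    triangle_Iio_zero q hq0 hq1, zero_add, triangle_Ici q hq0 hq1 le_rfl]
  norm_num

/-- integrand of the final 1-d integral -/
def gfun (q r : ℝ) : ℝ → ℝ := fun t =>
  (1 - q) / (1 + t * (1 - q)) ^ 2 * (r * t * (1 / (1 + r * t * (1 - q))))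

/-- antiderivative of `gfun` -/
def Ant (q r : ℝ) : ℝ → ℝ := fun t =>
  (r / ((1 - q) * (r - 1) ^ 2)) *
    (Real.log (1 + t * (1 - q)) - Real.log (1 + r * t * (1 - q)) - (r - 1) / (1 + t * (1 - q)))

lemma gfun_nonneg (q r : ℝ) (hr : 1 < r) (hq1 : q < 1) {t : ℝ} (ht : 0 ≤ t) :
    0 ≤ gfun q r t := by
  have hc : (0:ℝ) < 1 - q := by linarith
  have h1 : (0:ℝ) < 1 + t * (1 - q) := by nlinarith
  have hr0 : (0:ℝ) < r := lt_trans one_pos hr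
  have h2 : (0:ℝ) < 1 + r * t * (1 - q) := by nlinarith [mul_nonneg (mul_nonneg hr0.le ht) hc.le]
  have hrt : (0:ℝ) ≤ r * t := mul_nonneg hr0.le ht
  unfold gfun
  positivity

set_option maxHeartbeats 1000000 in
lemma hasDerivAt_Ant (q r : ℝ) (hr : 1 < r) (hq1 : q < 1) {x : ℝ} (hx : 0 ≤ x) :
    HasDerivAt (Ant q r) (gfun q r x) x := by
  have hc : (0:ℝ) < 1 - q := by linarith
  have h1 : (0:ℝ) < 1 + x * (1 - q) := by nlinarith
  have hr0 : (0:ℝ) < r := lt_trans one_pos hr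
  have h2 : (0:ℝ) < 1 + r * x * (1 - q) := by nlinarith [mul_nonneg (mul_nonneg hr0.le hx) hc.le]
  have d1 : HasDerivAt (fun t : ℝ => 1 + t * (1 - q)) (1 - q) x := by
    simpa using ((hasDerivAt_id x).mul_const (1 - q)).const_add 1
  have d2 : HasDerivAt (fun t : ℝ => 1 + r * t * (1 - q)) (r * (1 - q)) x := by
    simpa using (((hasDerivAt_id x).const_mul r).mul_const (1 - q)).const_add 1
  have dl1 := d1.log h1.ne'
  have dl2 := d2.log h2.ne'
  have dinv : HasDerivAt (fun t : ℝ => (r - 1) / (1 + t * (1 - q)))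
      ((r - 1) * (-(1 - q) / (1 + x * (1 - q)) ^ 2)) x := by
    have := (d1.inv h1.ne').const_mul (r - 1)
    simpa [div_eq_mul_inv] using this
  have := ((dl1.sub dl2).sub dinv).const_mul (r / ((1 - q) * (r - 1) ^ 2))
  refine this.congr_deriv ?_
  unfold gfun
  have hrm : r - 1 ≠ 0 := by linarith
  field_simp [h1.ne', h2.ne', hc.ne', hrm]
  ring

lemma lintegral_Phi (q r : ℝ) (hr : 1 < r) (hq0 : 0 ≤ q) (hq1 : q < 1) :
    ∃ E : ℝ, 0 ≤ E ∧
      (∫⁻ t, ENNReal.ofReal (dens q t) *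
        (ENNReal.ofReal (r * t) * triangle q (Ici (r * t))) ∂volume) = ENNReal.ofReal E ∧
      2 * E = G q r := by
  have hc : (0:ℝ) < 1 - q := by linarith
  have hr0 : (0:ℝ) < r := lt_trans one_pos hr
  have hrm : (0:ℝ) < r - 1 := by linarith
  have hpointwise : (fun t => ENNReal.ofReal (dens q t) *
      (ENNReal.ofReal (r * t) * triangle q (Ici (r * t)))) =
      (Ici (0:ℝ)).indicator
        (fun t => ENNReal.ofReal (if q * (r * t) ≤ 1 then gfun q r t else 0)) := by
    funext t
    by_cases h0 : (0:ℝ) ≤ t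
    · rw [Set.indicator_of_mem (mem_Ici.mpr h0)]
      have hrt : (0:ℝ) ≤ r * t := mul_nonneg hr0.le h0
      rw [triangle_Ici q hq0 hq1 hrt]
      by_cases hcond : q * (r * t) ≤ 1
      · rw [if_pos hcond, if_pos hcond]
        have hqt : q * t < 1 := by nlinarith [mul_nonneg hq0 h0]
        have hd : dens q t = (1 - q) / (1 + t * (1 - q)) ^ 2 := by simp [dens, h0, hqt]
        have h1 : (0:ℝ) < 1 + t * (1 - q) := by nlinarith
        have h2 : (0:ℝ) < 1 + r * t * (1 - q) := by nlinarith
        rw [hd, ← ENNReal.ofReal_mul hrt, ← ENNReal.ofReal_mul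
          (div_nonneg hc.le (le_of_lt (pow_pos h1 2)))]
        rfl
      · rw [if_neg hcond, if_neg hcond]
        simp
    · rw [Set.indicator_of_notMem (fun hmem => h0 (mem_Ici.mp hmem))]
      have hd : dens q t = 0 := by simp [dens, h0]
      simp [hd]
  rw [hpointwise, lintegral_indicator measurableSet_Ici]
  rcases eq_or_lt_of_le hq0 with hq | hq
  · -- q = 0
    have h0 : q = 0 := hq.symm
    subst h0
    have hcong : (∫⁻ t in Ici (0:ℝ),
          ENNReal.ofReal (if 0 * (r * t) ≤ 1 then gfun 0 r t else 0))
        = ∫⁻ t in Ioi (0:ℝ), ENNReal.ofReal (gfun 0 r t) := by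
      rw [← Measure.restrict_congr_set Ioi_ae_eq_Ici]
      exact setLIntegral_congr_fun measurableSet_Ioi
        (fun t ht => by norm_num)
    set k : ℝ := r / ((1 - (0:ℝ)) * (r - 1) ^ 2) with hk
    have hratio : Filter.Tendsto (fun t : ℝ => (1 + t * (1 - (0:ℝ))) / (1 + r * t * (1 - 0)))
        Filter.atTop (nhds (1 / r)) := by
      have ha : Filter.Tendsto (fun t : ℝ => t⁻¹ + 1) Filter.atTop (nhds (0 + 1)) :=
        tendsto_inv_atTop_zero.add tendsto_const_nhds
      have hb : Filter.Tendsto (fun t : ℝ => t⁻¹ + r) Filter.atTop (nhds (0 + r)) :=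
        tendsto_inv_atTop_zero.add tendsto_const_nhds
      have hdiv := ha.div hb (by linarith : (0:ℝ) + r ≠ 0)
      have heq : (fun t : ℝ => (t⁻¹ + 1) / (t⁻¹ + r)) =ᶠ[Filter.atTop]
          (fun t : ℝ => (1 + t * (1 - (0:ℝ))) / (1 + r * t * (1 - 0))) := by
        filter_upwards [Filter.eventually_gt_atTop 0] with t ht
        have hne : t ≠ 0 := ne_of_gt ht
        rw [div_eq_div_iff (by positivity) (by nlinarith)]
        field_simp
        ring
      have := hdiv.congr' heq
      simpa using this
    have hlog : Filter.Tendsto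
        (fun t : ℝ => Real.log (1 + t * (1 - (0:ℝ))) - Real.log (1 + r * t * (1 - 0)))
        Filter.atTop (nhds (-Real.log r)) := by
      have hcomp := ((Real.continuousAt_log (by positivity : (1:ℝ)/r ≠ 0)).tendsto).comp hratio
      have heq : (fun t : ℝ => Real.log ((1 + t * (1 - (0:ℝ))) / (1 + r * t * (1 - 0))))
          =ᶠ[Filter.atTop] (fun t : ℝ =>
            Real.log (1 + t * (1 - (0:ℝ))) - Real.log (1 + r * t * (1 - 0))) := by
        filter_upwards [Filter.eventually_gt_atTop 0] with t ht
        rw [Real.log_div (by nlinarith) (by nlinarith)]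
      have := (hcomp.congr' heq)
      rwa [one_div, Real.log_inv] at this
    have hterm : Filter.Tendsto (fun t : ℝ => (r - 1) / (1 + t * (1 - (0:ℝ))))
        Filter.atTop (nhds 0) := by
      have h1 : Filter.Tendsto (fun t : ℝ => 1 + t * (1 - (0:ℝ))) Filter.atTop Filter.atTop :=
        Filter.tendsto_atTop_add_const_left _ 1
          ((Filter.tendsto_id (α := ℝ)).atTop_mul_const (by norm_num))
      have := h1.inv_tendsto_atTop.const_mul (r - 1)
      simpa [div_eq_mul_inv] using this
    have htend : Filter.Tendsto (Ant 0 r) Filter.atTop (nhds (k * (-Real.log r - 0))) :=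
      ((hlog.sub hterm).const_mul k)
    have hderiv : ∀ x ∈ Ici (0:ℝ), HasDerivAt (Ant 0 r) (gfun 0 r x) x :=
      fun x hx => hasDerivAt_Ant 0 r hr (by norm_num) hx
    have hgnn : ∀ x ∈ Ioi (0:ℝ), 0 ≤ gfun 0 r x :=
      fun x hx => gfun_nonneg 0 r hr (by norm_num) (le_of_lt hx)
    have hint : IntegrableOn (gfun 0 r) (Ioi 0) :=
      integrableOn_Ioi_deriv_of_nonneg' hderiv hgnn htend
    have hEval : ∫ t in Ioi (0:ℝ), gfun 0 r t = k * (-Real.log r - 0) - Ant 0 r 0 :=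
      integral_Ioi_of_hasDerivAt_of_nonneg' hderiv hgnn htend
    refine ⟨∫ t in Ioi (0:ℝ), gfun 0 r t,
      setIntegral_nonneg measurableSet_Ioi hgnn, ?_, ?_⟩
    · rw [hcong, ← ofReal_integral_eq_lintegral_ofReal hint
        ((ae_restrict_iff' measurableSet_Ioi).2 (Filter.Eventually.of_forall hgnn))]
    · rw [hEval]
      have hA0 : Ant 0 r 0 = k * (-(r - 1)) := by
        simp [Ant, hk]
      rw [hA0, hk]
      unfold G
      have hne1 : (1:ℝ) - r ≠ 0 := by linarith
      norm_num
      field_simp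
      ring
  · -- q > 0
    set T : ℝ := 1 / (q * r) with hTdef
    have hqr : (0:ℝ) < q * r := mul_pos hq hr0
    have hT0 : (0:ℝ) ≤ T := by positivity
    have hsplit : Ici (0:ℝ) = Icc 0 T ∪ Ioi T := (Icc_union_Ioi_eq_Ici hT0).symm
    have hdisj : Disjoint (Icc (0:ℝ) T) (Ioi T) :=
      disjoint_left.mpr fun x hx hx' => absurd hx.2 (not_le.mpr hx')
    rw [hsplit, lintegral_union measurableSet_Ioi hdisj]
    have hzero : (∫⁻ t in Ioi T,
        ENNReal.ofReal (if q * (r * t) ≤ 1 then gfun q r t else 0)) = 0 := by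
      rw [setLIntegral_congr_fun measurableSet_Ioi (fun t ht => ?_), lintegral_zero]
      have h1 : (1:ℝ) < q * (r * t) := by
        have : q * r * T < q * r * t := mul_lt_mul_of_pos_left ht hqr
        rw [hTdef] at this
        field_simp at this
        linarith [this]
      rw [if_neg (not_le.mpr h1)]
      simp
    rw [hzero, add_zero]
    have hcong : (∫⁻ t in Icc (0:ℝ) T,
        ENNReal.ofReal (if q * (r * t) ≤ 1 then gfun q r t else 0))
        = ∫⁻ t in Ioc (0:ℝ) T, ENNReal.ofReal (gfun q r t) := by
      rw [setLIntegral_congr_fun measurableSet_Icc (fun t ht => ?_), ← Measure.restrict_congr_set Ioc_ae_eq_Icc]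
      have h1 : q * (r * t) ≤ 1 := by
        have : q * r * t ≤ q * r * T := mul_le_mul_of_nonneg_left ht.2 hqr.le
        rw [hTdef] at this
        field_simp at this
        linarith [this]
      rw [if_pos h1]
    rw [hcong]
    have hgnn : ∀ x ∈ Ioc (0:ℝ) T, 0 ≤ gfun q r x :=
      fun x hx => gfun_nonneg q r hr hq1 hx.1.le
    have hcontOn : ContinuousOn (gfun q r) (Icc 0 T) := by
      unfold gfun
      apply ContinuousOn.mul
      · apply ContinuousOn.div continuousOn_const (by fun_prop)
        intro x hx
        have : (0:ℝ) < 1 + x * (1 - q) := by nlinarith [hx.1]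
        positivity
      · apply ContinuousOn.mul (by fun_prop)
        apply ContinuousOn.div continuousOn_const (by fun_prop)
        intro x hx
        have : (0:ℝ) < 1 + r * x * (1 - q) := by
          nlinarith [mul_nonneg (mul_nonneg hr0.le hx.1) hc.le]
        positivity
    have hint : IntegrableOn (gfun q r) (Ioc 0 T) :=
      (hcontOn.integrableOn_Icc).mono_set Ioc_subset_Icc_self
    refine ⟨∫ t in Ioc (0:ℝ) T, gfun q r t,
      setIntegral_nonneg measurableSet_Ioc hgnn, ?_, ?_⟩
    · rw [← ofReal_integral_eq_lintegral_ofReal hint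
        ((ae_restrict_iff' measurableSet_Ioc).2 (Filter.Eventually.of_forall hgnn))]
    · have hEval : ∫ t in Ioc (0:ℝ) T, gfun q r t = Ant q r T - Ant q r 0 := by
        rw [← intervalIntegral.integral_of_le hT0]
        exact intervalIntegral.integral_eq_sub_of_hasDerivAt
          (fun x hx => hasDerivAt_Ant q r hr hq1 (by
            rw [uIcc_of_le hT0] at hx
            exact hx.1))
          (by
            apply ContinuousOn.intervalIntegrable
            rwa [uIcc_of_le hT0])
      rw [hEval]
      have hD : (0:ℝ) < 1 - q + q * r := by nlinarith
      have hT1 : 1 + T * (1 - q) = (1 - q + q * r) / (q * r) := by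
        rw [hTdef]; field_simp; ring
      have hT2 : 1 + r * T * (1 - q) = 1 / q := by
        rw [hTdef]; field_simp; ring
      have hA0 : Ant q r 0 = (r / ((1 - q) * (r - 1) ^ 2)) * (-(r - 1)) := by
        simp [Ant]
      have hAT : Ant q r T = (r / ((1 - q) * (r - 1) ^ 2)) *
          ((Real.log (1 - q + q * r) - (Real.log q + Real.log r)) - (-Real.log q)
            - (r - 1) / ((1 - q + q * r) / (q * r))) := by
        unfold Ant
        rw [hT1, hT2, Real.log_div hD.ne' hqr.ne', Real.log_mul hq.ne' hr0.ne',
          one_div, Real.log_inv]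
      rw [hAT, hA0]
      unfold G
      rw [Real.log_div hr0.ne' hD.ne']
      have hne1 : (1:ℝ) - r ≠ 0 := by linarith
      field_simp
      ring

lemma split_min_max (r a b : ℝ) (hr : 1 < r) (ha : 0 ≤ a) (hb : 0 ≤ b) :
    (if r * min a b ≤ max a b then r * min a b else 0)
      = (if r * a ≤ b then r * a else 0) + (if r * b ≤ a then r * b else 0) := by
  rcases le_total a b with hab | hab
  · rw [min_eq_left hab, max_eq_right hab]
    split_ifs with h1 h2 h2
    · have ha0 : a = 0 := le_antisymm (by nlinarith) ha
      have hb0 : b = 0 := le_antisymm (by nlinarith) hb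
      rw [ha0, hb0]; ring
    · ring
    · exfalso; nlinarith
    · ring
  · rw [min_eq_right hab, max_eq_left hab]
    split_ifs with h2 h1 h1
    · have ha0 : a = 0 := le_antisymm (by nlinarith) ha
      have hb0 : b = 0 := le_antisymm (by nlinarith) hb
      rw [ha0, hb0]; ring
    · ring
    · exfalso; nlinarith
    · ring

lemma markup_triangle (q r : ℝ) (hr : 1 < r) (hq0 : 0 ≤ q) (hq1 : q < 1) :
    markupRev r (triangle q) = G q r := by
  haveI hprob : IsProbabilityMeasure (triangle q) := triangle_prob q hq0 hq1
  have hr0 : (0:ℝ) < r := lt_trans one_pos hr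
  have hfm : Measurable (fun p : ℝ × ℝ =>
      if r * min p.1 p.2 ≤ max p.1 p.2 then r * min p.1 p.2 else 0) :=
    Measurable.ite (measurableSet_le (by fun_prop) (by fun_prop)) (by fun_prop)
      measurable_const
  have hset : ((triangle q).prod (triangle q)) {p : ℝ × ℝ | ¬ (0 ≤ p.1 ∧ 0 ≤ p.2)} = 0 := by
    have hsub : {p : ℝ × ℝ | ¬ (0 ≤ p.1 ∧ 0 ≤ p.2)} ⊆
        ((Iio 0 : Set ℝ) ×ˢ (univ : Set ℝ)) ∪ ((univ : Set ℝ) ×ˢ (Iio 0 : Set ℝ)) := by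
      intro p hp
      simp only [mem_setOf_eq, not_and, not_le] at hp
      by_cases h1 : 0 ≤ p.1
      · exact Or.inr ⟨trivial, by simpa using hp h1⟩
      · exact Or.inl ⟨by simpa using not_le.mp h1, trivial⟩
    refine measure_mono_null hsub (measure_union_null ?_ ?_) <;>
      rw [Measure.prod_prod] <;>
      simp [triangle_Iio_zero q hq0 hq1]
  have hae : ∀ᵐ p ∂((triangle q).prod (triangle q)), 0 ≤ p.1 ∧ 0 ≤ p.2 := by
    rw [ae_iff]; exact hset
  have hm1 : Measurable (fun p : ℝ × ℝ =>
      ENNReal.ofReal (if r * p.1 ≤ p.2 then r * p.1 else 0)) :=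
    ENNReal.measurable_ofReal.comp (Measurable.ite
      (measurableSet_le (by fun_prop) (by fun_prop)) (by fun_prop) measurable_const)
  have hm2 : Measurable (fun p : ℝ × ℝ =>
      ENNReal.ofReal (if r * p.2 ≤ p.1 then r * p.2 else 0)) :=
    ENNReal.measurable_ofReal.comp (Measurable.ite
      (measurableSet_le (by fun_prop) (by fun_prop)) (by fun_prop) measurable_const)
  have step1 : markupRev r (triangle q) =
      (∫⁻ p : ℝ × ℝ, ENNReal.ofReal
        (if r * min p.1 p.2 ≤ max p.1 p.2 then r * min p.1 p.2 else 0)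
        ∂((triangle q).prod (triangle q))).toReal := by
    unfold markupRev
    apply integral_eq_lintegral_of_nonneg_ae
    · filter_upwards [hae] with p hp
      have hmin : 0 ≤ min p.1 p.2 := le_min hp.1 hp.2
      have : (0:ℝ) ≤ if r * min p.1 p.2 ≤ max p.1 p.2 then r * min p.1 p.2 else 0 := by
        split_ifs
        · exact mul_nonneg hr0.le hmin
        · exact le_refl 0
      exact this
    · exact hfm.aestronglyMeasurable
  have step2 : (∫⁻ p : ℝ × ℝ, ENNReal.ofReal
        (if r * min p.1 p.2 ≤ max p.1 p.2 then r * min p.1 p.2 else 0)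
        ∂((triangle q).prod (triangle q)))
      = (∫⁻ p : ℝ × ℝ, ENNReal.ofReal (if r * p.1 ≤ p.2 then r * p.1 else 0)
          ∂((triangle q).prod (triangle q)))
        + (∫⁻ p : ℝ × ℝ, ENNReal.ofReal (if r * p.2 ≤ p.1 then r * p.2 else 0)
          ∂((triangle q).prod (triangle q))) := by
    rw [← lintegral_add_left hm1]
    apply lintegral_congr_ae
    filter_upwards [hae] with p hp
    rw [split_min_max r p.1 p.2 hr hp.1 hp.2, ENNReal.ofReal_add]
    · split_ifs
      · exact mul_nonneg hr0.le hp.1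
      · exact le_refl 0
    · split_ifs
      · exact mul_nonneg hr0.le hp.2
      · exact le_refl 0
  have hswap : (∫⁻ p : ℝ × ℝ, ENNReal.ofReal (if r * p.2 ≤ p.1 then r * p.2 else 0)
        ∂((triangle q).prod (triangle q)))
      = ∫⁻ p : ℝ × ℝ, ENNReal.ofReal (if r * p.1 ≤ p.2 then r * p.1 else 0)
        ∂((triangle q).prod (triangle q)) := by
    conv_rhs => rw [← Measure.prod_swap]
    rw [lintegral_map hm1 measurable_swap]
    rfl
  have hfub : (∫⁻ p : ℝ × ℝ, ENNReal.ofReal (if r * p.1 ≤ p.2 then r * p.1 else 0)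
        ∂((triangle q).prod (triangle q)))
      = ∫⁻ a, ENNReal.ofReal (r * a) * (triangle q) (Ici (r * a)) ∂(triangle q) := by
    rw [lintegral_prod _ hm1.aemeasurable]
    apply lintegral_congr
    intro a
    have hind : (fun b => ENNReal.ofReal (if r * a ≤ b then r * a else 0))
        = (Ici (r * a)).indicator (fun _ => ENNReal.ofReal (r * a)) := by
      funext b
      by_cases hb : r * a ≤ b
      · rw [Set.indicator_of_mem (mem_Ici.mpr hb), if_pos hb]
      · rw [Set.indicator_of_notMem (fun hmem => hb (mem_Ici.mp hmem)), if_neg hb]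
        simp
    rw [hind, lintegral_indicator measurableSet_Ici, setLIntegral_const]
  have hΦm : Measurable (fun a : ℝ =>
      ENNReal.ofReal (r * a) * (triangle q) (Ici (r * a))) := by
    apply Measurable.mul
    · exact ENNReal.measurable_ofReal.comp (by fun_prop)
    · have hanti : Antitone (fun x : ℝ => (triangle q) (Ici x)) :=
        fun x y hxy => measure_mono (Ici_subset_Ici.mpr hxy)
      exact hanti.measurable.comp (measurable_id.const_mul r)
  have houter : (∫⁻ a, ENNReal.ofReal (r * a) * (triangle q) (Ici (r * a)) ∂(triangle q))
      = ∫⁻ t, ENNReal.ofReal (dens q t) *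
          (ENNReal.ofReal (r * t) * (triangle q) (Ici (r * t))) ∂volume := by
    have hadd := lintegral_add_measure
      (fun a => ENNReal.ofReal (r * a) * (triangle q) (Ici (r * a)))
      (volume.withDensity (fun t => ENNReal.ofReal (dens q t)))
      ((ENNReal.ofReal q) • Measure.dirac (1 / q))
    rw [← triangle_eq] at hadd
    have hdm : Measurable (fun t => ENNReal.ofReal (dens q t)) :=
      ENNReal.measurable_ofReal.comp (measurable_dens q)
    rw [hadd, lintegral_smul_measure, lintegral_dirac' _ hΦm,
      lintegral_withDensity_eq_lintegral_mul _ hdm hΦm]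
    have hatom : ENNReal.ofReal q *
        (ENNReal.ofReal (r * (1/q)) * (triangle q) (Ici (r * (1/q)))) = 0 := by
      rcases eq_or_lt_of_le hq0 with hq | hq
      · rw [← hq]; simp
      · have hrq : (0:ℝ) ≤ r * (1/q) := by positivity
        rw [triangle_Ici q hq0 hq1 hrq]
        have hval : q * (r * (1/q)) = r := by field_simp
        rw [hval, if_neg (not_le.mpr hr)]
        simp
    rw [smul_eq_mul, hatom, add_zero]
    rfl
  obtain ⟨E, hE0, hEeq, hEG⟩ := lintegral_Phi q r hr hq0 hq1
  rw [step1, step2, hswap, hfub, houter, hEeq, ← ENNReal.ofReal_add hE0 hE0,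
    ENNReal.toReal_ofReal (by linarith)]
  linarith [hEG]

lemma part2 (q r : ℝ) (hr : 1 < r) (hq0 : 0 ≤ q) (hq1 : q < 1) :
    2 * r * (∫ s in (q * r / (1 - q + q * r))..1,
        (1 - s) / ((1 - q) * (r - s * r + s))) = G q r := by
  have hc : (0:ℝ) < 1 - q := by linarith
  have hr0 : (0:ℝ) < r := lt_trans one_pos hr
  have hD : (0:ℝ) < 1 - q + q * r := by nlinarith
  set a : ℝ := q * r / (1 - q + q * r) with hadef
  have ha0 : 0 ≤ a := by positivity
  have ha1 : a ≤ 1 := by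
    rw [hadef, div_le_one hD]; nlinarith
  set C : ℝ → ℝ := fun s => (1 / ((1 - q) * (r - 1) ^ 2)) *
    (Real.log (r - s * (r - 1)) - (r - s * (r - 1))) with hC
  have hden : ∀ s ∈ uIcc a 1, (0:ℝ) < r - s * (r - 1) := by
    intro s hs
    rw [uIcc_of_le ha1] at hs
    nlinarith [hs.1, hs.2]
  have hderiv : ∀ s ∈ uIcc a 1, HasDerivAt C ((1 - s) / ((1 - q) * (r - s * r + s))) s := by
    intro s hs
    have hds := hden s hs
    have d1 : HasDerivAt (fun s : ℝ => r - s * (r - 1)) (-(r - 1)) s := by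
      simpa using ((hasDerivAt_id s).mul_const (r - 1)).const_sub r
    have hcomb := ((d1.log hds.ne').sub d1).const_mul (1 / ((1 - q) * (r - 1) ^ 2))
    rw [hC]
    refine hcomb.congr_deriv ?_
    have hrm : r - 1 ≠ 0 := by linarith
    have hds' : r - s * r + s ≠ 0 := by nlinarith
    rw [show r - s * (r - 1) = r - s * r + s by ring]
    field_simp [show r * (1 - s) + s ≠ 0 by intro h; apply hds'; linarith]
    ring
  have hcont : ContinuousOn (fun s : ℝ => (1 - s) / ((1 - q) * (r - s * r + s)))
      (uIcc a 1) := by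
    apply ContinuousOn.div (by fun_prop) (by fun_prop)
    intro s hs
    have h1 := hden s hs
    have h2 : (0:ℝ) < (1 - q) * (r - s * r + s) := by nlinarith
    exact ne_of_gt h2
  rw [intervalIntegral.integral_eq_sub_of_hasDerivAt hderiv hcont.intervalIntegrable]
  have harg : r - 1 * (r - 1) = 1 := by ring
  have ha' : r - a * (r - 1) = r / (1 - q + q * r) := by
    rw [hadef]; field_simp; ring
  have hC1 : C 1 = (1 / ((1 - q) * (r - 1) ^ 2)) * (0 - 1) := by
    simp only [hC]; rw [harg, Real.log_one]
  have hCa : C a = (1 / ((1 - q) * (r - 1) ^ 2)) *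
      (Real.log (r / (1 - q + q * r)) - r / (1 - q + q * r)) := by
    simp only [hC]; rw [ha']
  rw [hC1, hCa]
  unfold G
  rw [Real.log_div hr0.ne' hD.ne']
  have hne1 : (1:ℝ) - r ≠ 0 := by linarith
  have hrm : r - 1 ≠ 0 := by linarith
  field_simp [hc.ne', hD.ne', hrm, hne1]
  ring

end Stmt5Aux

/-- for `r > 1` and `q̄ ∈ [0,1)`, the expected revenue of the
`r`-markup mechanism on two i.i.d. draws from `T_q̄` equals `G q̄ r`, and the
corresponding integral identity holds. -/
theorem stmt5 (r q : ℝ) (hr : 1 < r) (hq : q ∈ Set.Ico (0 : ℝ) 1) :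
    markupRev r (triangle q) = G q r ∧
    2 * r * (∫ s in (q * r / (1 - q + q * r))..1,
        (1 - s) / ((1 - q) * (r - s * r + s))) = G q r := by
  obtain ⟨hq0, hq1⟩ := hq
  exact ⟨Stmt5Aux.markup_triangle q r hr hq0 hq1, Stmt5Aux.part2 q r hr hq0 hq1⟩
end
end

section
/- For every r ≥ 1, q̄ ∈ (0,1), and q̄′ with q̄r/(q̄r + 1 − q̄) ≤ q̄′ ≤ min{r·q̄, 1}, the expected revenue of the second-price auction on two values drawn i.i.d. from the normalized quadrilateral distribution Q_{q̄,q̄′,r} equals q̄′ + (1 − q̄)·q̄′/(r·q̄); that is, E[min(v_1, v_2)] = q̄′ + (1 − q̄)·q̄′/(r·q̄). Consequently this revenue is strictly increasing in q̄′ with derivative 1 + (1−q̄)/(r·q̄) ≥ 1. -/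
open MeasureTheory Set

noncomputable section

lemma int_inv_sq (m k a b : ℝ) (h : ∀ s ∈ Set.uIcc a b, m * s + k ≠ 0) :
    ∫ s in a..b, m / (m * s + k) ^ 2 = 1 / (m * a + k) - 1 / (m * b + k) := by
  have hc : ContinuousOn (fun s : ℝ => m / (m * s + k) ^ 2) (Set.uIcc a b) := by
    apply continuousOn_const.div
    · fun_prop
    · exact fun s hs => pow_ne_zero 2 (h s hs)
  have hd : ∀ s ∈ Set.uIcc a b,
      HasDerivAt (fun u => -(m * u + k)⁻¹) (m / (m * s + k) ^ 2) s := by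
    intro s hs
    have h1 : HasDerivAt (fun u : ℝ => m * u + k) m s := by
      simpa using ((hasDerivAt_id s).const_mul m).add_const k
    have h2 := (h1.inv (h s hs)).neg
    rw [show m / (m * s + k) ^ 2 = -(-m / (m * s + k) ^ 2) by ring]
    exact h2
  rw [intervalIntegral.integral_eq_sub_of_hasDerivAt hd hc.intervalIntegrable]
  simp only [one_div]
  ring

lemma int_sq_frac (m k a b : ℝ) (h : ∀ s ∈ Set.uIcc a b, m * s + k ≠ 0) :
    ∫ s in a..b, (k / (m * s + k)) ^ 2
      = k * b / (m * b + k) - k * a / (m * a + k) := by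
  have hc : ContinuousOn (fun s : ℝ => (k / (m * s + k)) ^ 2) (Set.uIcc a b) := by
    apply ContinuousOn.pow
    apply continuousOn_const.div
    · fun_prop
    · exact fun s hs => h s hs
  have hd : ∀ s ∈ Set.uIcc a b,
      HasDerivAt (fun u => k * u / (m * u + k)) ((k / (m * s + k)) ^ 2) s := by
    intro s hs
    have h1 : HasDerivAt (fun u : ℝ => m * u + k) m s := by
      simpa using ((hasDerivAt_id s).const_mul m).add_const k
    have h0 : HasDerivAt (fun u : ℝ => k * u) k s := by
      simpa using (hasDerivAt_id s).const_mul k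
    have h2 := h0.div h1 (h s hs)
    have h3 : (k * (m * s + k) - k * s * m) / (m * s + k) ^ 2
        = (k / (m * s + k)) ^ 2 := by
      have : k * (m * s + k) - k * s * m = k ^ 2 := by ring
      rw [this, div_pow]
    rw [← h3]
    exact h2
  rw [intervalIntegral.integral_eq_sub_of_hasDerivAt hd hc.intervalIntegrable]

def qdens (q q' r t : ℝ) : ℝ :=
  if 0 ≤ t ∧ t * (r * q) < 1 then
    q' * (r * q) * (1 - q') / (q' + t * (r * q) * (1 - q')) ^ 2
  else if 1 ≤ t * (r * q) ∧ t * q < 1 then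
    (q' * q * (r - 1)) * ((r * q) * (q' - q)) /
      ((r * q) * (q' - q) * t + (r * q - q')) ^ 2
  else 0

def qsurv (q q' r t : ℝ) : ℝ :=
  if t * (r * q) < 1 then q' / (q' + t * (r * q) * (1 - q'))
  else if t * q < 1 then
    (q' * q * (r - 1)) / ((r * q) * (q' - q) * t + (r * q - q'))
  else 0

lemma quadri_eq_qdens (q q' r : ℝ) :
    quadri q q' r =
      volume.withDensity (fun t => ENNReal.ofReal (qdens q q' r t))
        + (ENNReal.ofReal q) • Measure.dirac (1 / q) := rfl

section hyps

variable {r q q' : ℝ} (hr : 1 ≤ r) (hq0 : 0 < q) (hq1 : q < 1)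
  (hlow : q * r / (q * r + 1 - q) ≤ q') (hhigh : q' ≤ min (r * q) 1)

include hr hq0 in
lemma hA_pos : 0 < r * q := mul_pos (lt_of_lt_of_le one_pos hr) hq0

include hr hq0 hq1 in
lemma hden_pos : 0 < q * r + 1 - q := by nlinarith

include hr hq0 hq1 hlow in
lemma hq'_ge_q : q ≤ q' := by
  refine le_trans ?_ hlow
  rw [le_div_iff₀ (hden_pos hr hq0 hq1)]
  nlinarith [mul_nonneg (mul_nonneg hq0.le (sub_nonneg.2 hr)) (sub_nonneg.2 hq1.le)]

include hr hq0 hq1 hlow in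
lemma hq'_pos : 0 < q' := lt_of_lt_of_le hq0 (hq'_ge_q hr hq0 hq1 hlow)

include hr hq0 hq1 hlow in
lemma hq'_gt_q (hr1 : 1 < r) : q < q' := by
  refine lt_of_lt_of_le ?_ hlow
  rw [lt_div_iff₀ (hden_pos hr hq0 hq1)]
  nlinarith [mul_pos (mul_pos hq0 (sub_pos.2 hr1)) (sub_pos.2 hq1)]

include hr hq0 in
lemma h_inv_le : 1 / (r * q) ≤ 1 / q := by
  apply one_div_le_one_div_of_le hq0
  nlinarith

/-- positivity of the first-branch denominator -/
lemma hden1 (hq'1 : q' ≤ 1) (hq'pos : 0 < q') (hA : 0 < r * q) :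
    ∀ s : ℝ, 0 ≤ s → 0 < q' + s * (r * q) * (1 - q') := by
  intro s hs
  have : 0 ≤ s * (r * q) * (1 - q') :=
    mul_nonneg (mul_nonneg hs hA.le) (by linarith)
  linarith

lemma qdens_nonneg (hq'1 : q' ≤ 1) (hq'q : q ≤ q') (hq0' : 0 ≤ q)
    (hr' : 1 ≤ r) : ∀ t, 0 ≤ qdens q q' r t := by
  intro t
  unfold qdens
  split_ifs with h1 h2
  · apply div_nonneg _ (by positivity)
    have hq'nn : (0:ℝ) ≤ q' := le_trans hq0' hq'q
    have : (0:ℝ) ≤ 1 - q' := by linarith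
    have : (0:ℝ) ≤ r * q := by nlinarith
    positivity
  · apply div_nonneg _ (by positivity)
    have h1 : (0:ℝ) ≤ q' * q * (r - 1) := by
      have : (0:ℝ) ≤ q' := le_trans hq0' hq'q
      have : (0:ℝ) ≤ r - 1 := by linarith
      positivity
    have h2 : (0:ℝ) ≤ (r * q) * (q' - q) := by
      have : (0:ℝ) ≤ r * q := by nlinarith
      have : (0:ℝ) ≤ q' - q := by linarith
      positivity
    exact mul_nonneg h1 h2
  · exact le_refl 0

lemma qdens_meas : Measurable (qdens q q' r) := by
  unfold qdens
  apply Measurable.ite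
  · exact (measurableSet_le measurable_const measurable_id).inter
      (measurableSet_lt (measurable_id.mul_const _) measurable_const)
  · fun_prop
  · apply Measurable.ite
    · exact (measurableSet_le measurable_const (measurable_id.mul_const _)).inter
        (measurableSet_lt (measurable_id.mul_const _) measurable_const)
    · fun_prop
    · fun_prop

include hr hq0 in
lemma qdens_zero : ∀ t, t ∉ Set.Icc 0 (1/q) → qdens q q' r t = 0 := by
  intro t ht
  have hA := hA_pos hr hq0
  rw [Set.mem_Icc] at ht
  push_neg at ht
  unfold qdens
  split_ifs with h1 h2
  · exfalso
    have ht2 : t < 1 / (r * q) := (lt_div_iff₀ hA).2 h1.2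
    have := ht h1.1
    have := h_inv_le hr hq0
    linarith
  · exfalso
    have ht0 : 0 ≤ t := by
      by_contra hneg
      push_neg at hneg
      nlinarith [h2.1]
    have ht2 : t < 1 / q := (lt_div_iff₀ hq0).2 h2.2
    have := ht ht0
    linarith
  · rfl


include hr hq0 hq1 hlow hhigh in
lemma qdens_integrable : Integrable (qdens q q' r) volume := by
  have hA := hA_pos hr hq0
  have hq'1 : q' ≤ 1 := le_trans hhigh (min_le_right _ _)
  have hq'pos := hq'_pos hr hq0 hq1 hlow
  have hq'q := hq'_ge_q hr hq0 hq1 hlow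
  have h1A1q := h_inv_le hr hq0
  -- piece 1 : [0, 1/(rq)]
  have hg1 : IntegrableOn
      (fun s => q' * (r * q) * (1 - q') / (q' + s * (r * q) * (1 - q')) ^ 2)
      (Set.Icc 0 (1 / (r * q))) volume := by
    apply ContinuousOn.integrableOn_Icc
    apply continuousOn_const.div
    · fun_prop
    · exact fun s hs => pow_ne_zero 2 (ne_of_gt (hden1 hq'1 hq'pos hA s hs.1))
  have hp1 : IntegrableOn (qdens q q' r) (Set.Icc 0 (1 / (r * q))) volume := by
    refine Integrable.congr hg1 ?_
    filter_upwards [ae_restrict_mem measurableSet_Icc,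
      ae_restrict_of_ae ((Set.countable_singleton (1 / (r * q))).ae_notMem volume)]
      with s hs hne
    have hslt : s < 1 / (r * q) :=
      lt_of_le_of_ne hs.2 (by simpa using hne)
    rw [qdens, if_pos ⟨hs.1, (lt_div_iff₀ hA).1 hslt⟩]
  -- piece 2 : (1/(rq), 1/q]
  have hp2 : IntegrableOn (qdens q q' r) (Set.Ioc (1 / (r * q)) (1 / q)) volume := by
    by_cases hr1 : r = 1
    · have : Set.Ioc (1 / (r * q)) (1 / q) = (∅ : Set ℝ) := by
        rw [hr1, one_mul, Set.Ioc_self]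
      rw [IntegrableOn, this, Measure.restrict_empty]
      exact integrable_zero_measure
    · have hr1' : 1 < r := lt_of_le_of_ne hr (Ne.symm hr1)
      have hq'gtq := hq'_gt_q hr hq0 hq1 hlow hr1'
      have hB : 0 < (r * q) * (q' - q) := mul_pos hA (sub_pos.2 hq'gtq)
      have hden2 : ∀ s ∈ Set.Icc (1 / (r * q)) (1 / q),
          (0:ℝ) < (r * q) * (q' - q) * s + (r * q - q') := by
        intro s hs
        have key : (r * q) * (q' - q) * (1 / (r * q)) + (r * q - q') = r * q - q := by
          field_simp
          ring
        have h2 : (r * q) * (q' - q) * (1 / (r * q)) ≤ (r * q) * (q' - q) * s :=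
          mul_le_mul_of_nonneg_left hs.1 hB.le
        nlinarith [mul_pos hq0 (sub_pos.2 hr1')]
      have hg2 : IntegrableOn
          (fun s => (q' * q * (r - 1)) * ((r * q) * (q' - q)) /
            ((r * q) * (q' - q) * s + (r * q - q')) ^ 2)
          (Set.Icc (1 / (r * q)) (1 / q)) volume := by
        apply ContinuousOn.integrableOn_Icc
        apply continuousOn_const.div
        · fun_prop
        · exact fun s hs => pow_ne_zero 2 (ne_of_gt (hden2 s hs))
      refine Integrable.congr (hg2.mono_set Set.Ioc_subset_Icc_self) ?_
      filter_upwards [ae_restrict_mem measurableSet_Ioc,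
        ae_restrict_of_ae ((Set.countable_singleton (1 / q)).ae_notMem volume)]
        with s hs hne
      have hs1 : 1 < s * (r * q) := by
        have := (div_lt_iff₀ hA).1 hs.1
        linarith
      have hs2 : s * q < 1 := by
        have hslt : s < 1 / q := lt_of_le_of_ne hs.2 (by simpa using hne)
        exact (lt_div_iff₀ hq0).1 hslt
      rw [qdens, if_neg (by rintro ⟨-, h⟩; linarith), if_pos ⟨hs1.le, hs2⟩]
  -- complement
  have hcompl : IntegrableOn (qdens q q' r) (Set.Icc 0 (1 / q))ᶜ volume := by
    refine Integrable.congr (integrableOn_zero (s := (Set.Icc 0 (1 / q))ᶜ)) ?_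
    filter_upwards [ae_restrict_mem measurableSet_Icc.compl] with s hs
    exact (qdens_zero hr hq0 s hs).symm
  rw [← integrableOn_univ]
  refine (hp1.union (hp2.union hcompl)).mono_set ?_
  intro t _
  by_cases h1 : t ∈ Set.Icc 0 (1 / q)
  · rw [Set.mem_Icc] at h1
    by_cases h2 : t ≤ 1 / (r * q)
    · exact Or.inl ⟨h1.1, h2⟩
    · exact Or.inr (Or.inl ⟨not_le.1 h2, h1.2⟩)
  · exact Or.inr (Or.inr h1)

include hr hq0 hq1 hlow hhigh in
lemma quadri_finite : IsFiniteMeasure (quadri q q' r) := by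
  constructor
  rw [quadri_eq_qdens, Measure.add_apply, Measure.smul_apply, smul_eq_mul,
    withDensity_apply _ MeasurableSet.univ, Measure.restrict_univ]
  apply ENNReal.add_lt_top.2
  constructor
  · exact (qdens_integrable hr hq0 hq1 hlow hhigh).lintegral_lt_top
  · simp only [measure_univ, mul_one]
    exact ENNReal.ofReal_lt_top

include hr hq0 in
lemma quadri_compl_zero : quadri q q' r ((Set.Icc 0 (1 / q))ᶜ) = 0 := by
  rw [quadri_eq_qdens, Measure.add_apply, Measure.smul_apply, smul_eq_mul,
    withDensity_apply _ measurableSet_Icc.compl,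
    Measure.dirac_apply' _ measurableSet_Icc.compl]
  have h1 : ∫⁻ t in (Set.Icc 0 (1 / q))ᶜ, ENNReal.ofReal (qdens q q' r t) = 0 := by
    rw [setLIntegral_congr_fun measurableSet_Icc.compl
      (fun t ht => by rw [qdens_zero hr hq0 t ht, ENNReal.ofReal_zero])]
    simp
  have h2 : (1:ℝ) / q ∈ Set.Icc 0 (1 / q) := by
    exact ⟨by positivity, le_rfl⟩
  rw [h1, Set.indicator_of_notMem (by simpa using h2)]
  simp

include hr hq0 hq1 hlow hhigh in
lemma quadri_surv : ∀ t : ℝ, 0 < t →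
    ((quadri q q' r) (Set.Ioi t)).toReal = qsurv q q' r t := by
  intro t ht
  have hA := hA_pos hr hq0
  have hq'1 : q' ≤ 1 := le_trans hhigh (min_le_right _ _)
  have hq'A : q' ≤ r * q := le_trans hhigh (min_le_left _ _)
  have hq'q := hq'_ge_q hr hq0 hq1 hlow
  have hq'pos := hq'_pos hr hq0 hq1 hlow
  have h1A1q := h_inv_le hr hq0
  have hInt := qdens_integrable hr hq0 hq1 hlow hhigh
  have hdnn := qdens_nonneg (q := q) (q' := q') (r := r) hq'1 hq'q hq0.le hr
  rw [quadri_eq_qdens, Measure.add_apply, Measure.smul_apply, smul_eq_mul,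
    withDensity_apply _ measurableSet_Ioi, Measure.dirac_apply' _ measurableSet_Ioi,
    show ∫⁻ s in Set.Ioi t, ENNReal.ofReal (qdens q q' r s)
        = ENNReal.ofReal (∫ s in Set.Ioi t, qdens q q' r s) from
      (ofReal_integral_eq_lintegral_ofReal hInt.integrableOn (ae_of_all _ hdnn)).symm]
  -- helper : tail integral from a point `t ≤ 1/q`
  have htail : ∀ u : ℝ, u ≤ 1 / q →
      ∫ s in Set.Ioi u, qdens q q' r s = ∫ s in u..(1 / q), qdens q q' r s := by
    intro u hu
    rw [← Set.Ioc_union_Ioi_eq_Ioi hu,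
      setIntegral_union (Set.Ioc_disjoint_Ioi le_rfl) measurableSet_Ioi
        hInt.integrableOn hInt.integrableOn,
      intervalIntegral.integral_of_le hu]
    have hz : ∫ s in Set.Ioi (1 / q), qdens q q' r s = 0 := by
      rw [setIntegral_congr_fun measurableSet_Ioi
        (fun s hs => qdens_zero hr hq0 s (by
          simp only [Set.mem_Icc, not_and, not_le]
          intro _
          exact hs))]
      simp
    rw [hz, add_zero]
  -- piece 2 : from 1/(rq) to 1/q
  have hpiece2 : ∫ s in (1 / (r * q))..(1 / q), qdens q q' r s = q' - q := by
    by_cases hr1 : r = 1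
    · have hq'eq : q' = q := by
        have h := le_trans hhigh (min_le_left _ _)
        rw [hr1, one_mul] at h
        exact le_antisymm h hq'q
      rw [hr1, one_mul, intervalIntegral.integral_same, hq'eq, sub_self]
    · have hr1' : 1 < r := lt_of_le_of_ne hr (Ne.symm hr1)
      have hq'gtq := hq'_gt_q hr hq0 hq1 hlow hr1'
      have hB : 0 < (r * q) * (q' - q) := mul_pos hA (sub_pos.2 hq'gtq)
      have hden2 : ∀ s ∈ Set.Icc (1 / (r * q)) (1 / q),
          (0:ℝ) < (r * q) * (q' - q) * s + (r * q - q') := by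
        intro s hs
        have key : (r * q) * (q' - q) * (1 / (r * q)) + (r * q - q') = r * q - q := by
          field_simp
          ring
        have h2 : (r * q) * (q' - q) * (1 / (r * q)) ≤ (r * q) * (q' - q) * s :=
          mul_le_mul_of_nonneg_left hs.1 hB.le
        nlinarith [mul_pos hq0 (sub_pos.2 hr1')]
      rw [intervalIntegral.integral_congr_ae
        (g := fun s => (q' * q * (r - 1)) *
          (((r * q) * (q' - q)) / (((r * q) * (q' - q)) * s + (r * q - q')) ^ 2)) ?_]
      · rw [intervalIntegral.integral_const_mul,
          int_inv_sq ((r * q) * (q' - q)) (r * q - q') _ _ (by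
            intro s hs
            rw [Set.uIcc_of_le h1A1q] at hs
            exact ne_of_gt (hden2 s hs))]
        have e1 : (r * q) * (q' - q) * (1 / (r * q)) + (r * q - q') = q * (r - 1) := by
          field_simp
          ring
        have e2 : (r * q) * (q' - q) * (1 / q) + (r * q - q') = q' * (r - 1) := by
          field_simp
          ring
        rw [e1, e2]
        have hz1 : q * (r - 1) ≠ 0 := ne_of_gt (mul_pos hq0 (sub_pos.2 hr1'))
        have hz2 : q' * (r - 1) ≠ 0 := ne_of_gt (mul_pos hq'pos (sub_pos.2 hr1'))
        field_simp
      · rw [Set.uIoc_of_le h1A1q]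
        filter_upwards [(Set.countable_singleton (1 / q)).ae_notMem volume]
          with s hne hs
        have hs1 : 1 < s * (r * q) := by
          have := (div_lt_iff₀ hA).1 hs.1
          linarith
        have hs2 : s * q < 1 :=
          (lt_div_iff₀ hq0).1 (lt_of_le_of_ne hs.2 (by simpa using hne))
        rw [qdens, if_neg (by rintro ⟨-, h⟩; linarith), if_pos ⟨hs1.le, hs2⟩]
        ring
  by_cases hc1 : t * (r * q) < 1
  · -- first branch
    have ht1A : t < 1 / (r * q) := (lt_div_iff₀ hA).2 hc1
    have ht1q : t < 1 / q := lt_of_lt_of_le ht1A h1A1q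
    have hpiece1 : ∫ s in t..(1 / (r * q)), qdens q q' r s
        = q' / (q' + t * (r * q) * (1 - q')) - q' := by
      rw [intervalIntegral.integral_congr_ae
        (g := fun s => q' *
          (((r * q) * (1 - q')) / (((r * q) * (1 - q')) * s + q') ^ 2)) ?_]
      · rw [intervalIntegral.integral_const_mul,
          int_inv_sq ((r * q) * (1 - q')) q' _ _ (by
            intro s hs
            rw [Set.uIcc_of_le ht1A.le] at hs
            have h0s : 0 ≤ s := le_trans ht.le hs.1
            have := hden1 hq'1 hq'pos hA s h0s
            have heq : (r * q) * (1 - q') * s + q' = q' + s * (r * q) * (1 - q') := by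
              ring
            rw [heq]
            exact ne_of_gt this)]
        have hd1 : q' + t * (r * q) * (1 - q') ≠ 0 :=
          ne_of_gt (hden1 hq'1 hq'pos hA t ht.le)
        have hd2 : (r * q) * (1 - q') * (1 / (r * q)) + q' = 1 := by
          field_simp
          ring
        rw [hd2]
        have hd3 : (r * q) * (1 - q') * t + q' = q' + t * (r * q) * (1 - q') := by
          ring
        rw [hd3]
        field_simp
      · rw [Set.uIoc_of_le ht1A.le]
        filter_upwards [(Set.countable_singleton (1 / (r * q))).ae_notMem volume]
          with s hne hs
        have hslt : s < 1 / (r * q) := lt_of_le_of_ne hs.2 (by simpa using hne)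
        have h0s : 0 ≤ s := le_trans ht.le hs.1.le
        rw [qdens, if_pos ⟨h0s, (lt_div_iff₀ hA).1 hslt⟩]
        ring
    rw [htail t ht1q.le,
      ← intervalIntegral.integral_add_adjacent_intervals
        hInt.intervalIntegrable hInt.intervalIntegrable,
      hpiece1, hpiece2,
      show q' / (q' + t * (r * q) * (1 - q')) - q' + (q' - q)
          = q' / (q' + t * (r * q) * (1 - q')) - q from by ring]
    have hDpos := hden1 hq'1 hq'pos hA t ht.le
    have hDle1 : q' + t * (r * q) * (1 - q') ≤ 1 := by
      nlinarith [mul_nonneg (sub_nonneg.2 hc1.le) (sub_nonneg.2 hq'1)]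
    have hqle : q ≤ q' / (q' + t * (r * q) * (1 - q')) := by
      rw [le_div_iff₀ hDpos]
      nlinarith [mul_le_mul_of_nonneg_left hDle1 hq0.le]
    rw [Set.indicator_of_mem (show (1:ℝ) / q ∈ Set.Ioi t from ht1q), Pi.one_apply,
      mul_one, ← ENNReal.ofReal_add (by linarith) hq0.le,
      ENNReal.toReal_ofReal (by linarith), qsurv, if_pos hc1]
    ring
  · by_cases hc2 : t * q < 1
    · -- middle branch; here r > 1 automatically
      have ht1q : t < 1 / q := (lt_div_iff₀ hq0).2 hc2
      have ht1A : 1 / (r * q) ≤ t := by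
        rw [div_le_iff₀ hA]
        linarith [not_lt.1 hc1]
      have hr1' : 1 < r := by
        have h := lt_of_lt_of_le hc2 (not_lt.1 hc1)
        have : q < r * q := by nlinarith
        nlinarith
      have hq'gtq := hq'_gt_q hr hq0 hq1 hlow hr1'
      have hB : 0 < (r * q) * (q' - q) := mul_pos hA (sub_pos.2 hq'gtq)
      have hden2 : ∀ s ∈ Set.Icc t (1 / q),
          (0:ℝ) < (r * q) * (q' - q) * s + (r * q - q') := by
        intro s hs
        have key : (r * q) * (q' - q) * (1 / (r * q)) + (r * q - q') = r * q - q := by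
          field_simp
          ring
        have h2 : (r * q) * (q' - q) * (1 / (r * q)) ≤ (r * q) * (q' - q) * s :=
          mul_le_mul_of_nonneg_left (le_trans ht1A hs.1) hB.le
        nlinarith [mul_pos hq0 (sub_pos.2 hr1')]
      have hpiece : ∫ s in t..(1 / q), qdens q q' r s
          = (q' * q * (r - 1)) / ((r * q) * (q' - q) * t + (r * q - q')) - q := by
        rw [intervalIntegral.integral_congr_ae
          (g := fun s => (q' * q * (r - 1)) *
            (((r * q) * (q' - q)) / (((r * q) * (q' - q)) * s + (r * q - q')) ^ 2)) ?_]
        · rw [intervalIntegral.integral_const_mul,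
            int_inv_sq ((r * q) * (q' - q)) (r * q - q') _ _ (by
              intro s hs
              rw [Set.uIcc_of_le ht1q.le] at hs
              exact ne_of_gt (hden2 s hs))]
          have e2 : (r * q) * (q' - q) * (1 / q) + (r * q - q') = q' * (r - 1) := by
            field_simp
            ring
          rw [e2]
          have hz2 : q' * (r - 1) ≠ 0 := ne_of_gt (mul_pos hq'pos (sub_pos.2 hr1'))
          have hz3 : (r * q) * (q' - q) * t + (r * q - q') ≠ 0 :=
            ne_of_gt (hden2 t ⟨le_rfl, ht1q.le⟩)
          rw [mul_sub, mul_one_div, mul_one_div,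
            show q' * q * (r - 1) / (q' * (r - 1)) = q by rw [div_eq_iff hz2]; ring]
        · rw [Set.uIoc_of_le ht1q.le]
          filter_upwards [(Set.countable_singleton (1 / q)).ae_notMem volume]
            with s hne hs
          have hs1 : 1 < s * (r * q) := by
            have h := not_lt.1 hc1
            nlinarith [hs.1]
          have hs2 : s * q < 1 :=
            (lt_div_iff₀ hq0).1 (lt_of_le_of_ne hs.2 (by simpa using hne))
          rw [qdens, if_neg (by rintro ⟨-, h⟩; linarith), if_pos ⟨hs1.le, hs2⟩]
          ring
      rw [htail t ht1q.le, hpiece]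
      have hDpos : (0:ℝ) < (r * q) * (q' - q) * t + (r * q - q') :=
        hden2 t ⟨le_rfl, ht1q.le⟩
      have hDle : (r * q) * (q' - q) * t + (r * q - q') ≤ q' * (r - 1) := by
        have h2 : (r * q) * (q' - q) * t ≤ (r * q) * (q' - q) * (1 / q) :=
          mul_le_mul_of_nonneg_left ht1q.le hB.le
        have e2 : (r * q) * (q' - q) * (1 / q) + (r * q - q') = q' * (r - 1) := by
          field_simp
          ring
        linarith
      have hqle : q ≤ (q' * q * (r - 1)) / ((r * q) * (q' - q) * t + (r * q - q')) := by
        rw [le_div_iff₀ hDpos]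
        nlinarith [mul_le_mul_of_nonneg_left hDle hq0.le]
      rw [Set.indicator_of_mem (show (1:ℝ) / q ∈ Set.Ioi t from ht1q), Pi.one_apply,
        mul_one, ← ENNReal.ofReal_add (by linarith) hq0.le,
        ENNReal.toReal_ofReal (by linarith), qsurv, if_neg hc1, if_pos hc2]
      ring
    · -- tail : everything is zero
      have ht1q : 1 / q ≤ t := by
        rw [div_le_iff₀ hq0]
        linarith [not_lt.1 hc2]
      have hz : ∫ s in Set.Ioi t, qdens q q' r s = 0 := by
        rw [setIntegral_congr_fun measurableSet_Ioi
          (fun s hs => qdens_zero hr hq0 s (by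
            simp only [Set.mem_Icc, not_and, not_le]
            intro _
            exact lt_of_le_of_lt ht1q hs))]
        simp
      rw [hz, Set.indicator_of_notMem (by simpa using ht1q), mul_zero, add_zero,
        ENNReal.ofReal_zero, ENNReal.toReal_zero, qsurv, if_neg hc1, if_neg hc2]

include hr hq0 hq1 hlow hhigh in
lemma quadri_min_integral :
    (∫ v : ℝ × ℝ, min v.1 v.2 ∂((quadri q q' r).prod (quadri q q' r)))
      = q' + (1 - q) * q' / (r * q) := by
  have hA := hA_pos hr hq0
  have hq'1 : q' ≤ 1 := le_trans hhigh (min_le_right _ _)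
  have hq'q := hq'_ge_q hr hq0 hq1 hlow
  have hq'pos := hq'_pos hr hq0 hq1 hlow
  have h1A1q := h_inv_le hr hq0
  have h1Apos : (0:ℝ) < 1 / (r * q) := by positivity
  have h1qpos : (0:ℝ) < 1 / q := by positivity
  haveI hfin : IsFiniteMeasure (quadri q q' r) := quadri_finite hr hq0 hq1 hlow hhigh
  have hcompl := quadri_compl_zero (q' := q') hr hq0
  have hprod : ∀ᵐ p ∂((quadri q q' r).prod (quadri q q' r)),
      p.1 ∈ Set.Icc 0 (1 / q) ∧ p.2 ∈ Set.Icc 0 (1 / q) := by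
    rw [ae_iff]
    have hsub : {p : ℝ × ℝ | ¬(p.1 ∈ Set.Icc 0 (1 / q) ∧ p.2 ∈ Set.Icc 0 (1 / q))}
        ⊆ ((Set.Icc (0:ℝ) (1 / q))ᶜ ×ˢ (Set.univ : Set ℝ)) ∪
          ((Set.univ : Set ℝ) ×ˢ (Set.Icc (0:ℝ) (1 / q))ᶜ) := by
      intro p hp
      simp only [Set.mem_setOf_eq] at hp
      rcases not_and_or.1 hp with h | h
      · exact Or.inl ⟨h, Set.mem_univ _⟩
      · exact Or.inr ⟨Set.mem_univ _, h⟩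
    refine measure_mono_null hsub (measure_union_null ?_ ?_) <;>
      rw [Measure.prod_prod, hcompl] <;> simp
  have hmin_int : Integrable (fun p : ℝ × ℝ => min p.1 p.2)
      ((quadri q q' r).prod (quadri q q' r)) := by
    refine Integrable.mono' (integrable_const (1 / q))
      (continuous_fst.min continuous_snd).aestronglyMeasurable ?_
    filter_upwards [hprod] with p hp
    rw [Real.norm_eq_abs, abs_of_nonneg (le_min hp.1.1 hp.2.1)]
    exact le_trans (min_le_left _ _) hp.1.2
  have hmin_nn : 0 ≤ᵐ[(quadri q q' r).prod (quadri q q' r)]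
      (fun p : ℝ × ℝ => min p.1 p.2) := by
    filter_upwards [hprod] with p hp
    exact le_min hp.1.1 hp.2.1
  rw [hmin_int.integral_eq_integral_meas_lt hmin_nn]
  have hEq : Set.EqOn
      (fun t => (((quadri q q' r).prod (quadri q q' r))
        {p : ℝ × ℝ | t < min p.1 p.2}).toReal)
      (fun t => qsurv q q' r t ^ 2) (Set.Ioi 0) := by
    intro t ht
    have hset : {p : ℝ × ℝ | t < min p.1 p.2} = Set.Ioi t ×ˢ Set.Ioi t := by
      ext p
      simp [lt_min_iff, Set.mem_prod]
    simp only
    rw [hset, Measure.prod_prod, ENNReal.toReal_mul,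
      quadri_surv hr hq0 hq1 hlow hhigh t ht, sq]
  simp only [measureReal_def]
  rw [setIntegral_congr_fun measurableSet_Ioi hEq]
  -- qsurv vanishes beyond 1/q
  have hqs0 : ∀ s : ℝ, 1 / q < s → qsurv q q' r s = 0 := by
    intro s hs
    have hs0 : 0 < s := lt_trans h1qpos hs
    have h1 : 1 < s * q := (div_lt_iff₀ hq0).1 hs
    have h2 : ¬ s * (r * q) < 1 := by nlinarith
    rw [qsurv, if_neg h2, if_neg (by linarith)]
  -- integrability of qsurv^2 on the pieces
  have hs1 : IntegrableOn (fun t => qsurv q q' r t ^ 2)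
      (Set.Ioc 0 (1 / (r * q))) volume := by
    have hg : IntegrableOn (fun s => (q' / (q' + s * (r * q) * (1 - q'))) ^ 2)
        (Set.Icc 0 (1 / (r * q))) volume := by
      apply ContinuousOn.integrableOn_Icc
      apply ContinuousOn.pow
      apply continuousOn_const.div
      · fun_prop
      · exact fun s hs => ne_of_gt (hden1 hq'1 hq'pos hA s hs.1)
    refine Integrable.congr (hg.mono_set Set.Ioc_subset_Icc_self) ?_
    filter_upwards [ae_restrict_mem measurableSet_Ioc,
      ae_restrict_of_ae ((Set.countable_singleton (1 / (r * q))).ae_notMem volume)]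
      with s hs hne
    have hslt : s < 1 / (r * q) := lt_of_le_of_ne hs.2 (by simpa using hne)
    rw [qsurv, if_pos ((lt_div_iff₀ hA).1 hslt)]
  have hs2 : IntegrableOn (fun t => qsurv q q' r t ^ 2)
      (Set.Ioc (1 / (r * q)) (1 / q)) volume := by
    by_cases hr1 : r = 1
    · have : Set.Ioc (1 / (r * q)) (1 / q) = (∅ : Set ℝ) := by
        rw [hr1, one_mul, Set.Ioc_self]
      rw [IntegrableOn, this, Measure.restrict_empty]
      exact integrable_zero_measure
    · have hr1' : 1 < r := lt_of_le_of_ne hr (Ne.symm hr1)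
      have hq'gtq := hq'_gt_q hr hq0 hq1 hlow hr1'
      have hB : 0 < (r * q) * (q' - q) := mul_pos hA (sub_pos.2 hq'gtq)
      have hden2 : ∀ s ∈ Set.Icc (1 / (r * q)) (1 / q),
          (0:ℝ) < (r * q) * (q' - q) * s + (r * q - q') := by
        intro s hs
        have key : (r * q) * (q' - q) * (1 / (r * q)) + (r * q - q') = r * q - q := by
          field_simp
          ring
        have h2 : (r * q) * (q' - q) * (1 / (r * q)) ≤ (r * q) * (q' - q) * s :=
          mul_le_mul_of_nonneg_left hs.1 hB.le
        nlinarith [mul_pos hq0 (sub_pos.2 hr1')]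
      have hg : IntegrableOn
          (fun s => ((q' * q * (r - 1)) /
            ((r * q) * (q' - q) * s + (r * q - q'))) ^ 2)
          (Set.Icc (1 / (r * q)) (1 / q)) volume := by
        apply ContinuousOn.integrableOn_Icc
        apply ContinuousOn.pow
        apply continuousOn_const.div
        · fun_prop
        · exact fun s hs => ne_of_gt (hden2 s hs)
      refine Integrable.congr (hg.mono_set Set.Ioc_subset_Icc_self) ?_
      filter_upwards [ae_restrict_mem measurableSet_Ioc,
        ae_restrict_of_ae ((Set.countable_singleton (1 / q)).ae_notMem volume)]
        with s hs hne
      have hs1' : 1 < s * (r * q) := by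
        have := (div_lt_iff₀ hA).1 hs.1
        linarith
      have hs2' : s * q < 1 :=
        (lt_div_iff₀ hq0).1 (lt_of_le_of_ne hs.2 (by simpa using hne))
      rw [qsurv, if_neg (by linarith), if_pos hs2']
  have hs3 : IntegrableOn (fun t => qsurv q q' r t ^ 2)
      (Set.Ioi (1 / q)) volume := by
    refine Integrable.congr (integrableOn_zero (s := Set.Ioi (1 / q))) ?_
    filter_upwards [ae_restrict_mem measurableSet_Ioi] with s hs
    rw [hqs0 s hs]
    norm_num
  have hsIoc : IntegrableOn (fun t => qsurv q q' r t ^ 2)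
      (Set.Ioc 0 (1 / q)) volume := by
    refine (hs1.union hs2).mono_set ?_
    rw [Set.Ioc_union_Ioc_eq_Ioc h1Apos.le h1A1q]
  rw [← Set.Ioc_union_Ioi_eq_Ioi h1qpos.le,
    setIntegral_union (Set.Ioc_disjoint_Ioi le_rfl) measurableSet_Ioi hsIoc hs3]
  have hzero2 : ∫ t in Set.Ioi (1 / q), qsurv q q' r t ^ 2 = 0 := by
    rw [setIntegral_congr_fun (g := fun _ => (0:ℝ)) measurableSet_Ioi
      (fun s hs => by simp [hqs0 s hs])]
    simp
  rw [hzero2, add_zero, ← intervalIntegral.integral_of_le h1qpos.le,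
    ← intervalIntegral.integral_add_adjacent_intervals
      ((intervalIntegrable_iff_integrableOn_Ioc_of_le h1Apos.le).2 hs1)
      ((intervalIntegrable_iff_integrableOn_Ioc_of_le h1A1q).2 hs2)]
  have hJ1 : ∫ t in (0:ℝ)..(1 / (r * q)), qsurv q q' r t ^ 2 = q' / (r * q) := by
    rw [intervalIntegral.integral_congr_ae
      (g := fun s => (q' / ((r * q) * (1 - q') * s + q')) ^ 2) ?_]
    · rw [int_sq_frac ((r * q) * (1 - q')) q' 0 (1 / (r * q)) (by
        intro s hs
        rw [Set.uIcc_of_le h1Apos.le] at hs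
        have := hden1 hq'1 hq'pos hA s hs.1
        have heq : (r * q) * (1 - q') * s + q' = q' + s * (r * q) * (1 - q') := by
          ring
        rw [heq]
        exact ne_of_gt this)]
      have hd2 : (r * q) * (1 - q') * (1 / (r * q)) + q' = 1 := by field_simp; ring
      rw [hd2]
      simp only [mul_zero, zero_div, sub_zero, div_one, mul_one_div]
    · rw [Set.uIoc_of_le h1Apos.le]
      filter_upwards [(Set.countable_singleton (1 / (r * q))).ae_notMem volume]
        with s hne hs
      have hslt : s < 1 / (r * q) := lt_of_le_of_ne hs.2 (by simpa using hne)
      rw [qsurv, if_pos ((lt_div_iff₀ hA).1 hslt)]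
      ring
  have hJ2 : ∫ t in (1 / (r * q))..(1 / q), qsurv q q' r t ^ 2
      = q' * (r - 1) / r := by
    by_cases hr1 : r = 1
    · rw [hr1, one_mul, intervalIntegral.integral_same]
      norm_num
    · have hr1' : 1 < r := lt_of_le_of_ne hr (Ne.symm hr1)
      have hq'gtq := hq'_gt_q hr hq0 hq1 hlow hr1'
      have hB : 0 < (r * q) * (q' - q) := mul_pos hA (sub_pos.2 hq'gtq)
      have hden2 : ∀ s ∈ Set.Icc (1 / (r * q)) (1 / q),
          (0:ℝ) < (r * q) * (q' - q) * s + (r * q - q') := by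
        intro s hs
        have key : (r * q) * (q' - q) * (1 / (r * q)) + (r * q - q') = r * q - q := by
          field_simp
          ring
        have h2 : (r * q) * (q' - q) * (1 / (r * q)) ≤ (r * q) * (q' - q) * s :=
          mul_le_mul_of_nonneg_left hs.1 hB.le
        nlinarith [mul_pos hq0 (sub_pos.2 hr1')]
      rw [intervalIntegral.integral_congr_ae
        (g := fun s => ((q' * q * (r - 1)) ^ 2 / ((r * q) * (q' - q))) *
          (((r * q) * (q' - q)) / (((r * q) * (q' - q)) * s + (r * q - q')) ^ 2)) ?_]
      · rw [intervalIntegral.integral_const_mul,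
          int_inv_sq ((r * q) * (q' - q)) (r * q - q') _ _ (by
            intro s hs
            rw [Set.uIcc_of_le h1A1q] at hs
            exact ne_of_gt (hden2 s hs))]
        have e1 : (r * q) * (q' - q) * (1 / (r * q)) + (r * q - q') = q * (r - 1) := by
          field_simp
          ring
        have e2 : (r * q) * (q' - q) * (1 / q) + (r * q - q') = q' * (r - 1) := by
          field_simp
          ring
        rw [e1, e2]
        have hz1 : q * (r - 1) ≠ 0 := ne_of_gt (mul_pos hq0 (sub_pos.2 hr1'))
        have hz2 : q' * (r - 1) ≠ 0 := ne_of_gt (mul_pos hq'pos (sub_pos.2 hr1'))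
        have hq'q0 : q' - q ≠ 0 := sub_ne_zero.2 hq'gtq.ne'
        field_simp
      · rw [Set.uIoc_of_le h1A1q]
        filter_upwards [(Set.countable_singleton (1 / q)).ae_notMem volume]
          with s hne hs
        have hs1' : 1 < s * (r * q) := by
          have := (div_lt_iff₀ hA).1 hs.1
          linarith
        have hs2' : s * q < 1 :=
          (lt_div_iff₀ hq0).1 (lt_of_le_of_ne hs.2 (by simpa using hne))
        have hms : (r * q) * (q' - q) * s + (r * q - q') ≠ 0 :=
          ne_of_gt (hden2 s ⟨by
            rw [div_le_iff₀ hA]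
            linarith, hs.2⟩)
        rw [qsurv, if_neg (by linarith), if_pos hs2']
        have hq'q0 : q' - q ≠ 0 := sub_ne_zero.2 hq'gtq.ne'
        field_simp
  rw [hJ1, hJ2]
  field_simp
  ring

end hyps

/-- the second-price auction revenue on two i.i.d. draws from the
quadrilateral distribution `Q_{q̄,q̄',r}` equals `q̄' + (1-q̄)·q̄'/(r·q̄)`; hence it is
strictly increasing in `q̄'` with slope `1 + (1-q̄)/(r·q̄) ≥ 1`. -/
theorem stmt11 (r q : ℝ) (hr : 1 ≤ r) (hq : q ∈ Set.Ioo (0 : ℝ) 1) :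
    (∀ q' : ℝ, q * r / (q * r + 1 - q) ≤ q' → q' ≤ min (r * q) 1 →
      (∫ v : ℝ × ℝ, min v.1 v.2 ∂((quadri q q' r).prod (quadri q q' r)))
        = q' + (1 - q) * q' / (r * q)) ∧
    1 ≤ 1 + (1 - q) / (r * q) ∧
    StrictMonoOn
      (fun s => ∫ v : ℝ × ℝ, min v.1 v.2 ∂((quadri q s r).prod (quadri q s r)))
      (Set.Icc (q * r / (q * r + 1 - q)) (min (r * q) 1)) := by
  obtain ⟨hq0, hq1⟩ := hq
  have hmain : ∀ q' : ℝ, q * r / (q * r + 1 - q) ≤ q' → q' ≤ min (r * q) 1 →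
      (∫ v : ℝ × ℝ, min v.1 v.2 ∂((quadri q q' r).prod (quadri q q' r)))
        = q' + (1 - q) * q' / (r * q) :=
    fun q' h1 h2 => quadri_min_integral hr hq0 hq1 h1 h2
  refine ⟨hmain, ?_, ?_⟩
  · have h := div_nonneg (by linarith : (0:ℝ) ≤ 1 - q) (hA_pos hr hq0).le
    linarith
  · intro a ha b hb hab
    simp only
    rw [hmain a ha.1 ha.2, hmain b hb.1 hb.2]
    have hA := hA_pos hr hq0
    have h1 : 0 < 1 + (1 - q) / (r * q) := by
      have := div_nonneg (by linarith : (0:ℝ) ≤ 1 - q) hA.le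
      linarith
    have he : ∀ x : ℝ, x + (1 - q) * x / (r * q) = x * (1 + (1 - q) / (r * q)) :=
      fun x => by ring
    rw [he a, he b]
    exact mul_lt_mul_of_pos_right hab h1
end
end

section
/- Define h_{α,r}(q̄) := ( α + (1−α)·G(q̄, r) ) / (2 − q̄), where G(q̄, r) = (2r / ((1−q̄)(r−1))) · ( (1−q̄)/(1−q̄+q̄r) + ln( r/(1−q̄+q̄r) ) / (1−r) ). Then for every α ∈ [0.8, 0.81], r ∈ [2.445, 2.449], and q̄ ∈ [0.093, 0.094], the second derivative of h_{α,r} with respect to q̄ satisfies h_{α,r}″(q̄) > 0.7; in particular h_{α,r} is strictly convex on [0.093, 0.094]. -/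
open MeasureTheory Set

noncomputable section

set_option maxHeartbeats 1000000

def D1e (α r s : ℝ) : ℝ :=
  (1 - α) * (-(2*r)/(1-s+s*r)^2 + 2*r/(r-1)/(1-s+s*r)/(1-s)
      - 2*r/(r-1)^2 * Real.log (r/(1-s+s*r)) / (1-s)^2) / (2-s)
  + (α + (1-α) * (2*r/(r-1)/(1-s+s*r)
      - 2*r/(r-1)^2 * Real.log (r/(1-s+s*r)) / (1-s))) / (2-s)^2

def D2e (α r s : ℝ) : ℝ :=
  (1 - α) * (4*r*(r-1)/(1-s+s*r)^3 - 2*r/(1-s+s*r)^2/(1-s) + 4*r/(r-1)/(1-s+s*r)/(1-s)^2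
      - 4*r*Real.log (r/(1-s+s*r))/(r-1)^2/(1-s)^3) / (2-s)
  + 2*((1 - α) * (-(2*r)/(1-s+s*r)^2 + 2*r/(r-1)/(1-s+s*r)/(1-s)
      - 2*r/(r-1)^2 * Real.log (r/(1-s+s*r)) / (1-s)^2)) / (2-s)^2
  + 2*(α + (1-α) * (2*r/(r-1)/(1-s+s*r)
      - 2*r/(r-1)^2 * Real.log (r/(1-s+s*r)) / (1-s))) / (2-s)^3

lemma aux_le (A B a0 b0 c : ℝ) (hA : A ≤ a0) (hB : b0 ≤ B) (hb0 : 0 < b0)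
    (h : a0 ≤ c * b0) (hc : 0 ≤ c) : A / B ≤ c := by
  rw [div_le_iff₀ (lt_of_lt_of_le hb0 hB)]
  nlinarith

lemma aux_ge (A B a0 b0 c : ℝ) (hA : a0 ≤ A) (hB : B ≤ b0) (hBpos : 0 < B)
    (h : c * b0 ≤ a0) (hc : 0 ≤ c) : c ≤ A / B := by
  rw [le_div_iff₀ hBpos]
  nlinarith

lemma aux_ge_neg (A B a0 b0 c : ℝ) (hA : a0 ≤ A) (hb0 : 0 < b0) (hB : b0 ≤ B)
    (h : c * b0 ≤ a0) (hc : c ≤ 0) : c ≤ A / B := by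
  rw [le_div_iff₀ (lt_of_lt_of_le hb0 hB)]
  nlinarith

lemma hda1 (α r : ℝ) (hr : 1 < r) {s : ℝ} (hs0 : 0 < s) (hs1 : s < 1/2) :
    HasDerivAt (fun t => (α + (1 - α) * G t r) / (2 - t)) (D1e α r s) s := by
  have hr0 : 0 < r := by linarith
  have hu : 0 < 1 - s + s * r := by nlinarith
  have hune : 1 - s + s * r ≠ 0 := ne_of_gt hu
  have h1s : (1:ℝ) - s ≠ 0 := by intro h; rw [sub_eq_zero] at h; linarith [h]
  have h2s : (2:ℝ) - s ≠ 0 := by intro h; rw [sub_eq_zero] at h; linarith [h]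
  have hk : r - 1 ≠ 0 := by intro h; rw [sub_eq_zero] at h; linarith [h.symm]
  have hk1 : 1 - r ≠ 0 := by intro h; rw [sub_eq_zero] at h; linarith [h]
  have hx : r / (1 - s + s * r) ≠ 0 := div_ne_zero (ne_of_gt hr0) hune
  have hU : HasDerivAt (fun t : ℝ => 1 - t + t * r) (0 - 1 + 1 * r) s :=
    ((hasDerivAt_const s 1).sub (hasDerivAt_id s)).add ((hasDerivAt_id s).mul_const r)
  have hA : HasDerivAt (fun t : ℝ => (1 - t) / (1 - t + t * r))
      (((0-1) * (1 - s + s*r) - (1-s) * (0 - 1 + 1*r)) / (1 - s + s*r)^2) s :=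
    HasDerivAt.div ((hasDerivAt_const s 1).sub (hasDerivAt_id s)) hU hune
  have hB : HasDerivAt (fun t : ℝ => r / (1 - t + t * r))
      ((0 * (1 - s + s*r) - r * (0 - 1 + 1*r)) / (1 - s + s*r)^2) s :=
    HasDerivAt.div (hasDerivAt_const s r) hU hune
  have hL : HasDerivAt (fun t : ℝ => Real.log (r / (1 - t + t * r)))
      (-(r-1)/(1 - s + s*r)) s := by
    convert hB.log hx using 1
    field_simp
    ring
  have hC := hA.add (hL.div_const (1 - r))
  have hpre : HasDerivAt (fun t : ℝ => 2 * r / ((1 - t) * (r - 1)))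
      (2*r/((1-s)^2*(r-1))) s := by
    have := HasDerivAt.div (hasDerivAt_const s (2*r))
      (((hasDerivAt_const s 1).sub (hasDerivAt_id s)).mul_const (r-1))
      (mul_ne_zero h1s hk)
    refine this.congr_deriv ?_
    simp only [Pi.add_apply, Pi.sub_apply, Pi.mul_apply, Pi.div_apply, Pi.pow_apply, id_eq]
    field_simp
    ring
  have hGd : HasDerivAt (fun t => G t r)
      (-(2*r)/(1-s+s*r)^2 + 2*r/(r-1)/(1-s+s*r)/(1-s)
        - 2*r/(r-1)^2 * Real.log (r/(1-s+s*r)) / (1-s)^2) s := by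
    simp only [G]
    refine (hpre.mul hC).congr_deriv ?_
    simp only [Pi.add_apply, Pi.sub_apply, Pi.mul_apply, Pi.div_apply, Pi.pow_apply, id_eq]
    have hune' : 1 - s + r * s ≠ 0 := by rw [mul_comm]; exact hune
    field_simp
    ring
  have hGv : G s r = 2*r/(r-1)/(1-s+s*r)
      - 2*r/(r-1)^2 * Real.log (r/(1-s+s*r)) / (1-s) := by
    simp only [G]
    field_simp
    ring
  have hD : HasDerivAt (fun t : ℝ => 2 - t) (0 - 1) s :=
    (hasDerivAt_const s 2).sub (hasDerivAt_id s)
  have hh := ((hasDerivAt_const s α).add (hGd.const_mul (1 - α))).div hD h2s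
  refine hh.congr_deriv ?_
  simp only [Pi.add_apply, Pi.sub_apply, Pi.mul_apply, Pi.div_apply, Pi.pow_apply, id_eq]
  rw [hGv]
  unfold D1e
  set P := -(2*r)/(1-s+s*r)^2 + 2*r/(r-1)/(1-s+s*r)/(1-s)
      - 2*r/(r-1)^2 * Real.log (r/(1-s+s*r)) / (1-s)^2 with hP
  set Z := 2*r/(r-1)/(1-s+s*r)
      - 2*r/(r-1)^2 * Real.log (r/(1-s+s*r)) / (1-s) with hZ
  field_simp
  ring


lemma hda2 (α r : ℝ) (hr : 1 < r) {s : ℝ} (hs0 : 0 < s) (hs1 : s < 1/2) :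
    HasDerivAt (fun t => D1e α r t) (D2e α r s) s := by
  have hr0 : 0 < r := by linarith
  have hu : 0 < 1 - s + s * r := by nlinarith
  have hune : 1 - s + s * r ≠ 0 := ne_of_gt hu
  have h1s : (1:ℝ) - s ≠ 0 := by intro h; rw [sub_eq_zero] at h; linarith [h]
  have h2s : (2:ℝ) - s ≠ 0 := by intro h; rw [sub_eq_zero] at h; linarith [h]
  have hk : r - 1 ≠ 0 := by intro h; rw [sub_eq_zero] at h; linarith [h.symm]
  have hx : r / (1 - s + s * r) ≠ 0 := div_ne_zero (ne_of_gt hr0) hune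
  have hU : HasDerivAt (fun t : ℝ => 1 - t + t * r) (0 - 1 + 1 * r) s :=
    ((hasDerivAt_const s 1).sub (hasDerivAt_id s)).add ((hasDerivAt_id s).mul_const r)
  have hB : HasDerivAt (fun t : ℝ => r / (1 - t + t * r))
      ((0 * (1 - s + s*r) - r * (0 - 1 + 1*r)) / (1 - s + s*r)^2) s :=
    HasDerivAt.div (hasDerivAt_const s r) hU hune
  have hL : HasDerivAt (fun t : ℝ => Real.log (r / (1 - t + t * r)))
      (-(r-1)/(1 - s + s*r)) s := by
    convert hB.log hx using 1
    field_simp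
    ring
  have hOne : HasDerivAt (fun t : ℝ => 1 - t) (0 - 1) s :=
    (hasDerivAt_const s 1).sub (hasDerivAt_id s)
  have hD : HasDerivAt (fun t : ℝ => 2 - t) (0 - 1) s :=
    (hasDerivAt_const s 2).sub (hasDerivAt_id s)
  have hp1 : HasDerivAt (fun t : ℝ => -(2*r)/(1-t+t*r)^2)
      (4*r*(r-1)/(1-s+s*r)^3) s := by
    have h := (HasDerivAt.div (hasDerivAt_const s (2*r)) (hU.pow 2)
      (pow_ne_zero 2 hune)).neg
    have hfe : (fun t:ℝ => -(2*r)/(1-t+t*r)^2) = fun x:ℝ => -(2*r/(1-x+x*r)^2) := by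
      funext t; ring
    rw [hfe]
    refine h.congr_deriv ?_
    simp only [Pi.add_apply, Pi.sub_apply, Pi.mul_apply, Pi.div_apply, Pi.pow_apply, id_eq]
    push_cast
    field_simp
    ring
  have hp2 : HasDerivAt (fun t : ℝ => 2*r/(r-1)/(1-t+t*r)/(1-t))
      (-(2*r)/(1-s+s*r)^2/(1-s) + 2*r/(r-1)/(1-s+s*r)/(1-s)^2) s := by
    have h := HasDerivAt.div
      (HasDerivAt.div (hasDerivAt_const s (2*r/(r-1))) hU hune) hOne h1s
    refine h.congr_deriv ?_
    simp only [Pi.add_apply, Pi.sub_apply, Pi.mul_apply, Pi.div_apply, Pi.pow_apply, id_eq]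
    field_simp
    ring
  have hp3 : HasDerivAt (fun t : ℝ => 2*r/(r-1)^2 * Real.log (r/(1-t+t*r)) / (1-t)^2)
      (-(2*r)/(r-1)/(1-s+s*r)/(1-s)^2
        + 4*r*Real.log (r/(1-s+s*r))/(r-1)^2/(1-s)^3) s := by
    have h := HasDerivAt.div (hL.const_mul (2*r/(r-1)^2)) (hOne.pow 2) (pow_ne_zero 2 h1s)
    refine h.congr_deriv ?_
    simp only [Pi.add_apply, Pi.sub_apply, Pi.mul_apply, Pi.div_apply, Pi.pow_apply, id_eq]
    push_cast
    field_simp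
    ring
  have hPd : HasDerivAt (fun t : ℝ => -(2*r)/(1-t+t*r)^2 + 2*r/(r-1)/(1-t+t*r)/(1-t)
      - 2*r/(r-1)^2 * Real.log (r/(1-t+t*r)) / (1-t)^2)
      (4*r*(r-1)/(1-s+s*r)^3 - 2*r/(1-s+s*r)^2/(1-s) + 4*r/(r-1)/(1-s+s*r)/(1-s)^2
        - 4*r*Real.log (r/(1-s+s*r))/(r-1)^2/(1-s)^3) s := by
    refine ((hp1.add hp2).sub hp3).congr_deriv ?_
    ring
  have hZd : HasDerivAt (fun t : ℝ => 2*r/(r-1)/(1-t+t*r)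
      - 2*r/(r-1)^2 * Real.log (r/(1-t+t*r)) / (1-t))
      (-(2*r)/(1-s+s*r)^2 + 2*r/(r-1)/(1-s+s*r)/(1-s)
        - 2*r/(r-1)^2 * Real.log (r/(1-s+s*r)) / (1-s)^2) s := by
    have z1 : HasDerivAt (fun t : ℝ => 2*r/(r-1)/(1-t+t*r))
        (-(2*r)/(1-s+s*r)^2) s := by
      have h := HasDerivAt.div (hasDerivAt_const s (2*r/(r-1))) hU hune
      refine h.congr_deriv ?_
      field_simp
      ring
    have z2 : HasDerivAt (fun t : ℝ => 2*r/(r-1)^2 * Real.log (r/(1-t+t*r)) / (1-t))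
        (-(2*r)/(r-1)/(1-s+s*r)/(1-s)
          + 2*r*Real.log (r/(1-s+s*r))/(r-1)^2/(1-s)^2) s := by
      have h := HasDerivAt.div (hL.const_mul (2*r/(r-1)^2)) hOne h1s
      refine h.congr_deriv ?_
      field_simp
      ring
    refine (z1.sub z2).congr_deriv ?_
    ring
  have hmain := ((hPd.const_mul (1-α)).div hD h2s).add
    (((hasDerivAt_const s α).add (hZd.const_mul (1-α))).div (hD.pow 2) (pow_ne_zero 2 h2s))
  have hfun : (fun t => D1e α r t) = (fun t : ℝ =>
      (1 - α) * (-(2*r)/(1-t+t*r)^2 + 2*r/(r-1)/(1-t+t*r)/(1-t)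
        - 2*r/(r-1)^2 * Real.log (r/(1-t+t*r)) / (1-t)^2) / (2-t)
      + (α + (1-α) * (2*r/(r-1)/(1-t+t*r)
        - 2*r/(r-1)^2 * Real.log (r/(1-t+t*r)) / (1-t))) / (2-t)^2) := by
    funext t; unfold D1e; rfl
  rw [hfun]
  refine hmain.congr_deriv ?_
  simp only [Pi.add_apply, Pi.sub_apply, Pi.mul_apply, Pi.div_apply, Pi.pow_apply, id_eq]
  unfold D2e
  set Pp := 4*r*(r-1)/(1-s+s*r)^3 - 2*r/(1-s+s*r)^2/(1-s) + 4*r/(r-1)/(1-s+s*r)/(1-s)^2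
      - 4*r*Real.log (r/(1-s+s*r))/(r-1)^2/(1-s)^3 with hPp
  set Pex := -(2*r)/(1-s+s*r)^2 + 2*r/(r-1)/(1-s+s*r)/(1-s)
      - 2*r/(r-1)^2 * Real.log (r/(1-s+s*r)) / (1-s)^2 with hPex
  set Zex := 2*r/(r-1)/(1-s+s*r)
      - 2*r/(r-1)^2 * Real.log (r/(1-s+s*r)) / (1-s) with hZex
  push_cast
  field_simp
  ring

lemma Dbnd (α r q : ℝ) (hα1 : (0.8:ℝ) ≤ α) (hα2 : α ≤ 0.81)
    (hr1 : (2.445:ℝ) ≤ r) (hr2 : r ≤ 2.449) (hq1 : (0.093:ℝ) ≤ q) (hq2 : q ≤ 0.094) :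
    (0.7:ℝ) < D2e α r q := by
  have hu1 : (1.134385:ℝ) ≤ 1 - q + q*r := by
    nlinarith [mul_nonneg (sub_nonneg.mpr hq1) (sub_nonneg.mpr hr1)]
  have hu2 : 1 - q + q*r ≤ (1.136206:ℝ) := by
    nlinarith [mul_nonneg (by linarith : (0:ℝ) ≤ 0.094 - q) (by linarith : (0:ℝ) ≤ 2.449 - r)]
  have hup : (0:ℝ) < 1 - q + q*r := by linarith
  have hl0 : 0 ≤ Real.log (r / (1-q+q*r)) := by
    apply Real.log_nonneg
    rw [le_div_iff₀ hup]; nlinarith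
  have hlup : Real.log (r / (1-q+q*r)) ≤ 0.76985 := by
    rw [Real.log_le_iff_le_exp (div_pos (by linarith) hup)]
    have hx : r / (1-q+q*r) ≤ 2.1582 := by
      rw [div_le_iff₀ hup]
      nlinarith [mul_nonneg (sub_nonneg.mpr hq1) (by linarith : (0:ℝ) ≤ r - 1)]
    have hs := Real.sum_le_exp_of_nonneg (by norm_num : (0:ℝ) ≤ 0.76985) 7
    have hsum : (2.1582:ℝ) ≤ ∑ i ∈ Finset.range 7, (0.76985:ℝ)^i / (i.factorial : ℝ) := by
      simp only [Finset.sum_range_succ, Finset.sum_range_zero]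
      norm_num [Nat.factorial]
    linarith
  have hnum1 : (14.1321:ℝ) ≤ 4*r*(r-1) := by
    nlinarith [mul_nonneg (sub_nonneg.mpr hr1) (by linarith : (0:ℝ) ≤ r + 1.445)]
  -- power bounds
  have hu3 : (1-q+q*r)^3 ≤ 1.466802 := by
    calc (1-q+q*r)^3 ≤ (1.136206:ℝ)^3 := pow_le_pow_left₀ (by linarith) hu2 3
      _ ≤ 1.466802 := by norm_num
  have husq_lo : (1.286829:ℝ) ≤ (1-q+q*r)^2 := by
    calc (1.286829:ℝ) ≤ (1.134385:ℝ)^2 := by norm_num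
      _ ≤ (1-q+q*r)^2 := pow_le_pow_left₀ (by norm_num) hu1 2
  have husq_hi : (1-q+q*r)^2 ≤ 1.290965 := by
    calc (1-q+q*r)^2 ≤ (1.136206:ℝ)^2 := pow_le_pow_left₀ (by linarith) hu2 2
      _ ≤ 1.290965 := by norm_num
  have hm1sq_lo : (0.820836:ℝ) ≤ (1-q)^2 := by
    calc (0.820836:ℝ) ≤ (0.906:ℝ)^2 := by norm_num
      _ ≤ (1-q)^2 := pow_le_pow_left₀ (by norm_num) (by linarith) 2
  have hm1sq_hi : (1-q)^2 ≤ 0.822649 := by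
    calc (1-q)^2 ≤ (0.907:ℝ)^2 := pow_le_pow_left₀ (by linarith) (by linarith) 2
      _ ≤ 0.822649 := by norm_num
  have hm1cub_lo : (0.743677:ℝ) ≤ (1-q)^3 := by
    calc (0.743677:ℝ) ≤ (0.906:ℝ)^3 := by norm_num
      _ ≤ (1-q)^3 := pow_le_pow_left₀ (by norm_num) (by linarith) 3
  have hm2sq_lo : (3.632836:ℝ) ≤ (2-q)^2 := by
    calc (3.632836:ℝ) ≤ (1.906:ℝ)^2 := by norm_num
      _ ≤ (2-q)^2 := pow_le_pow_left₀ (by norm_num) (by linarith) 2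
  have hm2cub_hi : (2-q)^3 ≤ 6.935090 := by
    calc (2-q)^3 ≤ (1.907:ℝ)^3 := pow_le_pow_left₀ (by linarith) (by linarith) 3
      _ ≤ 6.935090 := by norm_num
  have hk2lo : (2.088025:ℝ) ≤ (r-1)^2 := by
    calc (2.088025:ℝ) ≤ (1.445:ℝ)^2 := by norm_num
      _ ≤ (r-1)^2 := pow_le_pow_left₀ (by norm_num) (by linarith) 2
  -- Pp pieces
  have ha1 : (9.6346:ℝ) ≤ 4*r*(r-1)/(1-q+q*r)^3 :=
    aux_ge _ _ 14.1321 1.466802 _ hnum1 hu3 (pow_pos hup 3) (by norm_num) (by norm_num)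
  have hi2 : 2*r/(1-q+q*r)^2 ≤ 3.8063 :=
    aux_le _ _ 4.898 1.286829 _ (by linarith) husq_lo (by norm_num) (by norm_num) (by norm_num)
  have ha2 : 2*r/(1-q+q*r)^2/(1-q) ≤ 4.2013 :=
    aux_le _ _ 3.8063 0.906 _ hi2 (by linarith) (by norm_num) (by norm_num) (by norm_num)
  have hi3a : (6.7494:ℝ) ≤ 4*r/(r-1) :=
    aux_ge _ _ 9.78 1.449 _ (by linarith) (by linarith) (by linarith) (by norm_num) (by norm_num)
  have hi3b : (5.9402:ℝ) ≤ 4*r/(r-1)/(1-q+q*r) :=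
    aux_ge _ _ 6.7494 1.136206 _ hi3a hu2 hup (by norm_num) (by norm_num)
  have hi3c : (7.2208:ℝ) ≤ 4*r/(r-1)/(1-q+q*r)/(1-q)^2 :=
    aux_ge _ _ 5.9402 0.822649 _ hi3b hm1sq_hi
      (pow_pos (by linarith : (0:ℝ) < 1-q) 2) (by norm_num) (by norm_num)
  have hi4a : 4*r*Real.log (r/(1-q+q*r)) ≤ 7.5415 := by
    have e1 : (4*r)*Real.log (r/(1-q+q*r)) ≤ (4*r)*0.76985 :=
      mul_le_mul_of_nonneg_left hlup (by linarith)
    have e2 : (4*r)*(0.76985:ℝ) ≤ (4*2.449)*0.76985 := by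
      apply mul_le_mul_of_nonneg_right _ (by norm_num)
      linarith
    calc 4*r*Real.log (r/(1-q+q*r)) = (4*r)*Real.log (r/(1-q+q*r)) := by ring
      _ ≤ (4*r)*0.76985 := e1
      _ ≤ (4*2.449)*0.76985 := e2
      _ ≤ 7.5415 := by norm_num
  have hi4b : 4*r*Real.log (r/(1-q+q*r))/(r-1)^2 ≤ 3.6119 :=
    aux_le _ _ 7.5415 2.088025 _ hi4a hk2lo (by norm_num) (by norm_num) (by norm_num)
  have hi4c : 4*r*Real.log (r/(1-q+q*r))/(r-1)^2/(1-q)^3 ≤ 4.8571 :=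
    aux_le _ _ 3.6119 0.743677 _ hi4b hm1cub_lo (by norm_num) (by norm_num) (by norm_num)
  -- Pex pieces
  have hb1lo : (3.7878:ℝ) ≤ 2*r/(1-q+q*r)^2 :=
    aux_ge _ _ 4.89 1.290965 _ (by linarith) husq_hi (pow_pos hup 2) (by norm_num) (by norm_num)
  have hj2a : (3.3747:ℝ) ≤ 2*r/(r-1) :=
    aux_ge _ _ 4.89 1.449 _ (by linarith) (by linarith) (by linarith) (by norm_num) (by norm_num)
  have hj2b : (2.9701:ℝ) ≤ 2*r/(r-1)/(1-q+q*r) :=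
    aux_ge _ _ 3.3747 1.136206 _ hj2a hu2 hup (by norm_num) (by norm_num)
  have hj2c : (3.2746:ℝ) ≤ 2*r/(r-1)/(1-q+q*r)/(1-q) :=
    aux_ge _ _ 2.9701 0.907 _ hj2b (by linarith) (by linarith) (by norm_num) (by norm_num)
  have hj2a2 : 2*r/(r-1) ≤ 3.3897 :=
    aux_le _ _ 4.898 1.445 _ (by linarith) (by linarith) (by norm_num) (by norm_num) (by norm_num)
  have hj2b2 : 2*r/(r-1)/(1-q+q*r) ≤ 2.9882 :=
    aux_le _ _ 3.3897 1.134385 _ hj2a2 hu1 (by norm_num) (by norm_num) (by norm_num)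
  have hj2c2 : 2*r/(r-1)/(1-q+q*r)/(1-q) ≤ 3.2983 :=
    aux_le _ _ 2.9882 0.906 _ hj2b2 (by linarith) (by norm_num) (by norm_num) (by norm_num)
  have hj3a : 2*r/(r-1)^2 ≤ 2.3458 :=
    aux_le _ _ 4.898 2.088025 _ (by linarith) hk2lo (by norm_num) (by norm_num) (by norm_num)
  have hj3ann : (0:ℝ) ≤ 2*r/(r-1)^2 := div_nonneg (by linarith) (by positivity)
  have hj3b : 2*r/(r-1)^2 * Real.log (r/(1-q+q*r)) ≤ 1.8060 := by
    have e1 : 2*r/(r-1)^2 * Real.log (r/(1-q+q*r)) ≤ 2*r/(r-1)^2 * 0.76985 :=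
      mul_le_mul_of_nonneg_left hlup hj3ann
    have e2 : 2*r/(r-1)^2 * (0.76985:ℝ) ≤ 2.3458 * 0.76985 :=
      mul_le_mul_of_nonneg_right hj3a (by norm_num)
    calc 2*r/(r-1)^2 * Real.log (r/(1-q+q*r)) ≤ 2*r/(r-1)^2 * 0.76985 := e1
      _ ≤ 2.3458 * 0.76985 := e2
      _ ≤ 1.8060 := by norm_num
  have hj3bnn : 0 ≤ 2*r/(r-1)^2 * Real.log (r/(1-q+q*r)) := mul_nonneg hj3ann hl0
  have hb3 : 2*r/(r-1)^2 * Real.log (r/(1-q+q*r)) / (1-q)^2 ≤ 2.2002 :=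
    aux_le _ _ 1.8060 0.820836 _ hj3b hm1sq_lo (by norm_num) (by norm_num) (by norm_num)
  have hb3lo : 0 ≤ 2*r/(r-1)^2 * Real.log (r/(1-q+q*r)) / (1-q)^2 :=
    div_nonneg hj3bnn (by positivity)
  have hz2 : 2*r/(r-1)^2 * Real.log (r/(1-q+q*r)) / (1-q) ≤ 1.9934 :=
    aux_le _ _ 1.8060 0.906 _ hj3b (by linarith) (by norm_num) (by norm_num) (by norm_num)
  -- aggregates
  have hPp : (7.7970:ℝ) ≤ 4*r*(r-1)/(1-q+q*r)^3 - 2*r/(1-q+q*r)^2/(1-q)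
      + 4*r/(r-1)/(1-q+q*r)/(1-q)^2 - 4*r*Real.log (r/(1-q+q*r))/(r-1)^2/(1-q)^3 := by
    linarith only [ha1, ha2, hi3c, hi4c]
  have hPexlo : (-2.7319:ℝ) ≤ -(2*r)/(1-q+q*r)^2 + 2*r/(r-1)/(1-q+q*r)/(1-q)
      - 2*r/(r-1)^2 * Real.log (r/(1-q+q*r)) / (1-q)^2 := by
    have hneg : -(2*r)/(1-q+q*r)^2 = -(2*r/(1-q+q*r)^2) := by ring
    rw [hneg]; linarith only [hi2, hj2c, hb3]
  have hPexup : -(2*r)/(1-q+q*r)^2 + 2*r/(r-1)/(1-q+q*r)/(1-q)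
      - 2*r/(r-1)^2 * Real.log (r/(1-q+q*r)) / (1-q)^2 ≤ (-0.4895:ℝ) := by
    have hneg : -(2*r)/(1-q+q*r)^2 = -(2*r/(1-q+q*r)^2) := by ring
    rw [hneg]; linarith only [hb1lo, hj2c2, hb3lo]
  have hZlo : (0.9767:ℝ) ≤ 2*r/(r-1)/(1-q+q*r)
      - 2*r/(r-1)^2 * Real.log (r/(1-q+q*r)) / (1-q) := by
    linarith only [hj2b, hz2]
  -- numerators and final terms
  have hN1 : (1.48143:ℝ) ≤ (1-α) * (4*r*(r-1)/(1-q+q*r)^3 - 2*r/(1-q+q*r)^2/(1-q)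
      + 4*r/(r-1)/(1-q+q*r)/(1-q)^2 - 4*r*Real.log (r/(1-q+q*r))/(r-1)^2/(1-q)^3) := by
    have e := mul_le_mul (by linarith : (0.19:ℝ) ≤ 1-α) hPp (by norm_num) (by linarith)
    linarith only [e]
  have hT1 : (0.7768:ℝ) ≤ (1-α) * (4*r*(r-1)/(1-q+q*r)^3 - 2*r/(1-q+q*r)^2/(1-q)
      + 4*r/(r-1)/(1-q+q*r)/(1-q)^2
      - 4*r*Real.log (r/(1-q+q*r))/(r-1)^2/(1-q)^3) / (2-q) :=
    aux_ge _ _ 1.48143 1.907 _ hN1 (by linarith) (by linarith) (by norm_num) (by norm_num)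
  have hN2 : (-1.09276:ℝ) ≤ 2*((1-α) * (-(2*r)/(1-q+q*r)^2 + 2*r/(r-1)/(1-q+q*r)/(1-q)
      - 2*r/(r-1)^2 * Real.log (r/(1-q+q*r)) / (1-q)^2)) := by
    have e1 := mul_le_mul_of_nonpos_right (by linarith : 1-α ≤ (0.2:ℝ))
      (by linarith only [hPexup] : -(2*r)/(1-q+q*r)^2 + 2*r/(r-1)/(1-q+q*r)/(1-q)
        - 2*r/(r-1)^2 * Real.log (r/(1-q+q*r)) / (1-q)^2 ≤ 0)
    have e2 := mul_le_mul_of_nonneg_left hPexlo (by norm_num : (0:ℝ) ≤ 0.2)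
    linarith only [e1, e2]
  have hT2 : (-0.3009:ℝ) ≤ 2*((1-α) * (-(2*r)/(1-q+q*r)^2 + 2*r/(r-1)/(1-q+q*r)/(1-q)
      - 2*r/(r-1)^2 * Real.log (r/(1-q+q*r)) / (1-q)^2)) / (2-q)^2 :=
    aux_ge_neg _ _ (-1.09276) 3.632836 _ hN2 (by norm_num) hm2sq_lo (by norm_num) (by norm_num)
  have hN3 : (1.971146:ℝ) ≤ 2*(α + (1-α) * (2*r/(r-1)/(1-q+q*r)
      - 2*r/(r-1)^2 * Real.log (r/(1-q+q*r)) / (1-q))) := by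
    have e := mul_le_mul (by linarith : (0.19:ℝ) ≤ 1-α) hZlo (by norm_num) (by linarith)
    linarith only [e, hα1]
  have hT3 : (0.2842:ℝ) ≤ 2*(α + (1-α) * (2*r/(r-1)/(1-q+q*r)
      - 2*r/(r-1)^2 * Real.log (r/(1-q+q*r)) / (1-q))) / (2-q)^3 :=
    aux_ge _ _ 1.971146 6.935090 _ hN3 hm2cub_hi
      (pow_pos (by linarith : (0:ℝ) < 2-q) 3) (by norm_num) (by norm_num)
  unfold D2e
  linarith only [hT1, hT2, hT3]

/-- the reciprocal approximation ratio
`h_{α,r}(q̄) = (α + (1-α)·G(q̄,r)) / (2-q̄)` has second derivative `> 0.7` for all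
`α ∈ [0.8, 0.81]`, `r ∈ [2.445, 2.449]`, `q̄ ∈ [0.093, 0.094]`; in particular it is
strictly convex on `[0.093, 0.094]`. -/
theorem stmt15 (α r : ℝ) (hα : α ∈ Set.Icc (0.8 : ℝ) 0.81)
    (hr : r ∈ Set.Icc (2.445 : ℝ) 2.449) :
    (∀ q ∈ Set.Icc (0.093 : ℝ) 0.094,
      0.7 < deriv (deriv (fun s : ℝ => (α + (1 - α) * G s r) / (2 - s))) q) ∧
    StrictConvexOn ℝ (Set.Icc (0.093 : ℝ) 0.094)
      (fun s : ℝ => (α + (1 - α) * G s r) / (2 - s)) := by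
  obtain ⟨hα1, hα2⟩ := hα
  obtain ⟨hr1, hr2⟩ := hr
  have hr' : (1:ℝ) < r := by linarith
  have key : ∀ q ∈ Set.Icc (0.093 : ℝ) 0.094,
      0.7 < deriv (deriv (fun s : ℝ => (α + (1 - α) * G s r) / (2 - s))) q := by
    intro q hq
    obtain ⟨hq1, hq2⟩ := hq
    have hev : deriv (fun s : ℝ => (α + (1 - α) * G s r) / (2 - s))
        =ᶠ[nhds q] (fun t => D1e α r t) := by
      filter_upwards [Ioo_mem_nhds (by linarith : (0:ℝ) < q) (by linarith : q < 1/2)] with t ht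
      exact (hda1 α r hr' ht.1 ht.2).deriv
    rw [Filter.EventuallyEq.deriv_eq hev]
    rw [(hda2 α r hr' (by linarith : (0:ℝ) < q) (by linarith : q < 1/2)).deriv]
    exact Dbnd α r q hα1 hα2 hr1 hr2 hq1 hq2
  refine ⟨key, ?_⟩
  refine strictConvexOn_of_deriv2_pos (convex_Icc _ _) ?_ ?_
  · intro x hx
    exact (hda1 α r hr' (by linarith [hx.1] : (0:ℝ) < x)
      (by linarith [hx.2] : x < 1/2)).continuousAt.continuousWithinAt
  · intro x hx
    rw [interior_Icc] at hx
    have h07 := key x ⟨le_of_lt hx.1, le_of_lt hx.2⟩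
    have hit : deriv^[2] (fun s : ℝ => (α + (1 - α) * G s r) / (2 - s))
        = deriv (deriv (fun s : ℝ => (α + (1 - α) * G s r) / (2 - s))) := rfl
    rw [hit]
    linarith
end
end

section
/- Define G(q̄, r) := (2r / ((1−q̄)(r−1))) · ( (1−q̄)/(1−q̄+q̄r) + ln( r/(1−q̄+q̄r) ) / (1−r) ). For every q̄ ∈ [0, 0.09310569], G(q̄, 2.446946) > 1. (Thus for every triangle distribution T_{q̄} with q̄ ≤ 0.09310569, the 2.446946-markup mechanism strictly outperforms the second-price auction, whose revenue on T_{q̄} is 1.) -/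
open MeasureTheory Set

noncomputable section

set_option maxHeartbeats 2000000 in
/-- for every `q̄ ∈ [0, 0.09310569]`, `G(q̄, 2.446946) > 1`: the
`2.446946`-markup mechanism strictly outperforms the second-price auction
(whose revenue on `T_q̄` is `1`). -/
theorem stmt18 (q : ℝ) (hq : q ∈ Set.Icc (0 : ℝ) 0.09310569) :
    1 < G q 2.446946 := by
  obtain ⟨hq0, hq1⟩ := hq
  have hc : Real.log 2.446946 < 0.8948407168 := by
    have h := Real.abs_log_sub_add_sum_range_le
      (x := (1446946/2446946 : ℝ)) (by rw [abs_of_pos] <;> norm_num) 42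
    rw [show (1:ℝ) - 1446946/2446946 = (2.446946:ℝ)⁻¹ by norm_num, Real.log_inv,
      abs_of_pos (by norm_num : (0:ℝ) < 1446946/2446946)] at h
    have h3 := (abs_le.1 h).1
    have h4 : Real.log 2.446946 ≤
        (∑ i ∈ Finset.range 42, (1446946/2446946:ℝ)^(i+1)/(i+1))
          + (1446946/2446946:ℝ)^43/(1 - 1446946/2446946) := by linarith
    refine lt_of_le_of_lt h4 ?_
    norm_num [Finset.sum_range_succ]
  have hLD : 1.446946*q - (1.446946*q)^2/2 + (1.446946*q)^3/3 - (1.446946*q)^4/4 + (1.446946*q)^5/5 - (1.446946*q)^6/6 + (1.446946*q)^7/7 - (1.446946*q)^8/8 + (1.446946*q)^9/9 - (1.446946*q)^10/10 - 1.16*(1.446946*q)^11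
      ≤ Real.log (1 - q + q * 2.446946) := by
    have hz0 : (0:ℝ) ≤ 1.446946*q := by nlinarith
    have hz1 : 1.446946*q ≤ 0.14 := by nlinarith
    have habs : |(-(1.446946*q))| = 1.446946*q := by rw [abs_neg, abs_of_nonneg hz0]
    have h := Real.abs_log_sub_add_sum_range_le (x := -(1.446946*q))
      (by rw [habs]; linarith) 10
    rw [habs, show (1:ℝ) - -(1.446946*q) = 1 - q + q * 2.446946 by ring] at h
    have hsum : (∑ i ∈ Finset.range 10, (-(1.446946*q))^(i+1)/(i+1)) =
        -(1.446946*q) + (1.446946*q)^2/2 - (1.446946*q)^3/3 + (1.446946*q)^4/4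
        - (1.446946*q)^5/5 + (1.446946*q)^6/6 - (1.446946*q)^7/7 + (1.446946*q)^8/8
        - (1.446946*q)^9/9 + (1.446946*q)^10/10 := by
      norm_num [Finset.sum_range_succ]
      ring
    rw [hsum] at h
    norm_num at h
    have h1 := (abs_le.1 h).1
    have htail : (1.446946*q)^11/(1 - 1.446946*q) ≤ 1.16*(1.446946*q)^11 := by
      rw [div_le_iff₀ (by linarith)]
      nlinarith [pow_nonneg hz0 11]
    linarith
  have hP : (1-q)*(2.446946-1)*((1 - q + q * 2.446946)*1.446946) <
      2*2.446946*((1-q)*1.446946 +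
        ((1.446946*q - (1.446946*q)^2/2 + (1.446946*q)^3/3 - (1.446946*q)^4/4 + (1.446946*q)^5/5 - (1.446946*q)^6/6 + (1.446946*q)^7/7 - (1.446946*q)^8/8 + (1.446946*q)^9/9 - (1.446946*q)^10/10 - 1.16*(1.446946*q)^11) - 0.8948407168)*(1 - q + q * 2.446946)) := by
    rcases eq_or_lt_of_le hq1 with h|h
    · subst h
      norm_num
    · have hs : (0:ℝ) < 0.09310569 - q := by linarith
      have hid : 2*2.446946*((1-q)*1.446946 +
          ((1.446946*q - (1.446946*q)^2/2 + (1.446946*q)^3/3 - (1.446946*q)^4/4 + (1.446946*q)^5/5 - (1.446946*q)^6/6 + (1.446946*q)^7/7 - (1.446946*q)^8/8 + (1.446946*q)^9/9 - (1.446946*q)^10/10 - 1.16*(1.446946*q)^11) - 0.8948407168)*(1 - q + q * 2.446946))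
          - (1-q)*(2.446946-1)*((1 - q + q * 2.446946)*1.446946) =
          (608290901694214400000000000000000000000000000000000000000000000000000000000000000000000000000000/424340687586826798165760390113872193868173638389801083496794189375027638177418206561 : ℝ) * q^0 * (0.09310569 - q)^12 +
      (9084223476736505055406267264000000000000000000000000000000000000000000000000000000000000000000/582085991202780244397476529648658702151129819464747713987372001886183317115800009 : ℝ) * q^1 * (0.09310569 - q)^11 +
      (10923286502933107080132288347224926400000000000000000000000000000000000000000000000000000000000000/141446895862275599388586796704624064622724546129933694498931396458342546059139402187 : ℝ) * q^2 * (0.09310569 - q)^10 +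
      (97288658868864153629440275668825752096474088986832000000000000000000000000000000000000000000000000/424340687586826798165760390113872193868173638389801083496794189375027638177418206561 : ℝ) * q^3 * (0.09310569 - q)^9 +
      (7131341141438793302111623341430099226908431000993921304938834080000000000000000000000000000000000/15716321762475066598731866300513784958080505125548188277659044050926949562126600243 : ℝ) * q^4 * (0.09310569 - q)^8 +
      (29637316645830344895540190202619502854274922284172703097785214222301604382637440000000000000000000/47148965287425199796195598901541354874241515376644564832977132152780848686379800729 : ℝ) * q^5 * (0.09310569 - q)^7 +
      (87973800074662272104582624372632858009462814675227806247468330376066539599991083039378833228800000/141446895862275599388586796704624064622724546129933694498931396458342546059139402187 : ℝ) * q^6 * (0.09310569 - q)^6 +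
      (18888964812737507272458713885765845327819480686606790166978483187673769439162797324213912016249520748311/42974317319267760230907446915467380744751381202670827321723948576753377708939922539453125 : ℝ) * q^7 * (0.09310569 - q)^5 +
      (5606217719381515969509696021433087708499833477401797514331784988346680459363405530872069528461345630642282284709818537/25784590391560656138544468149280428446850828721602496393034369146052026625363953523671875000000000000000 : ℝ) * q^8 * (0.09310569 - q)^4 +
      (831905975093590099497238180087869518100593248632340264658204215772901730248805748078387333980604625794520634805837280523419317949017/11603065676202295262345010667176192801082872924721123376865466115723411981413779085652343750000000000000000000000000000 : ℝ) * q^9 * (0.09310569 - q)^3 +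
      (380982651716480554959634867454246978026280448012668169882906046326888942072284786372968184637198922091744071582997966770533242203450474220634173/26858948324542350144317154322167112965469613251669267076077467860470861068087451587158203125000000000000000000000000000000000000000 : ℝ) * q^10 * (0.09310569 - q)^2 +
      (11011656013835484940266432410302548710024800661358877772198465631544745075053173136770721218958459252823620093075130333271935707362471831016984100815772777971/8633233390031469689244799603553714881758089973750835845882043240865633914742395153015136718750000000000000000000000000000000000000000000000000000 : ℝ) * q^11 * (0.09310569 - q)^1 +
      (305439427553344328454496344061720875969640280628959736776867605524340017765112159773393349901732761362066124016603546202325199747214193640963620967657923881997784261/4532447529766521586853519791865700312922997236219188819088072701454457805239757455332946777343750000000000000000000000000000000000000000000000000000000000000000 : ℝ) * q^12 * (0.09310569 - q)^0 := by ring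
      have t0 : (0:ℝ) < (608290901694214400000000000000000000000000000000000000000000000000000000000000000000000000000000/424340687586826798165760390113872193868173638389801083496794189375027638177418206561 : ℝ) * q^0 * (0.09310569 - q)^12 := by
        simp only [pow_zero, mul_one]
        exact mul_pos (by norm_num) (pow_pos hs 12)
      have t1 : (0:ℝ) ≤ (9084223476736505055406267264000000000000000000000000000000000000000000000000000000000000000000/582085991202780244397476529648658702151129819464747713987372001886183317115800009 : ℝ) * q^1 * (0.09310569 - q)^11 :=
        mul_nonneg (mul_nonneg (by norm_num) (pow_nonneg hq0 1)) (pow_nonneg hs.le 11)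
      have t2 : (0:ℝ) ≤ (10923286502933107080132288347224926400000000000000000000000000000000000000000000000000000000000000/141446895862275599388586796704624064622724546129933694498931396458342546059139402187 : ℝ) * q^2 * (0.09310569 - q)^10 :=
        mul_nonneg (mul_nonneg (by norm_num) (pow_nonneg hq0 2)) (pow_nonneg hs.le 10)
      have t3 : (0:ℝ) ≤ (97288658868864153629440275668825752096474088986832000000000000000000000000000000000000000000000000/424340687586826798165760390113872193868173638389801083496794189375027638177418206561 : ℝ) * q^3 * (0.09310569 - q)^9 :=
        mul_nonneg (mul_nonneg (by norm_num) (pow_nonneg hq0 3)) (pow_nonneg hs.le 9)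
      have t4 : (0:ℝ) ≤ (7131341141438793302111623341430099226908431000993921304938834080000000000000000000000000000000000/15716321762475066598731866300513784958080505125548188277659044050926949562126600243 : ℝ) * q^4 * (0.09310569 - q)^8 :=
        mul_nonneg (mul_nonneg (by norm_num) (pow_nonneg hq0 4)) (pow_nonneg hs.le 8)
      have t5 : (0:ℝ) ≤ (29637316645830344895540190202619502854274922284172703097785214222301604382637440000000000000000000/47148965287425199796195598901541354874241515376644564832977132152780848686379800729 : ℝ) * q^5 * (0.09310569 - q)^7 :=
        mul_nonneg (mul_nonneg (by norm_num) (pow_nonneg hq0 5)) (pow_nonneg hs.le 7)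
      have t6 : (0:ℝ) ≤ (87973800074662272104582624372632858009462814675227806247468330376066539599991083039378833228800000/141446895862275599388586796704624064622724546129933694498931396458342546059139402187 : ℝ) * q^6 * (0.09310569 - q)^6 :=
        mul_nonneg (mul_nonneg (by norm_num) (pow_nonneg hq0 6)) (pow_nonneg hs.le 6)
      have t7 : (0:ℝ) ≤ (18888964812737507272458713885765845327819480686606790166978483187673769439162797324213912016249520748311/42974317319267760230907446915467380744751381202670827321723948576753377708939922539453125 : ℝ) * q^7 * (0.09310569 - q)^5 :=
        mul_nonneg (mul_nonneg (by norm_num) (pow_nonneg hq0 7)) (pow_nonneg hs.le 5)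
      have t8 : (0:ℝ) ≤ (5606217719381515969509696021433087708499833477401797514331784988346680459363405530872069528461345630642282284709818537/25784590391560656138544468149280428446850828721602496393034369146052026625363953523671875000000000000000 : ℝ) * q^8 * (0.09310569 - q)^4 :=
        mul_nonneg (mul_nonneg (by norm_num) (pow_nonneg hq0 8)) (pow_nonneg hs.le 4)
      have t9 : (0:ℝ) ≤ (831905975093590099497238180087869518100593248632340264658204215772901730248805748078387333980604625794520634805837280523419317949017/11603065676202295262345010667176192801082872924721123376865466115723411981413779085652343750000000000000000000000000000 : ℝ) * q^9 * (0.09310569 - q)^3 :=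
        mul_nonneg (mul_nonneg (by norm_num) (pow_nonneg hq0 9)) (pow_nonneg hs.le 3)
      have t10 : (0:ℝ) ≤ (380982651716480554959634867454246978026280448012668169882906046326888942072284786372968184637198922091744071582997966770533242203450474220634173/26858948324542350144317154322167112965469613251669267076077467860470861068087451587158203125000000000000000000000000000000000000000 : ℝ) * q^10 * (0.09310569 - q)^2 :=
        mul_nonneg (mul_nonneg (by norm_num) (pow_nonneg hq0 10)) (pow_nonneg hs.le 2)
      have t11 : (0:ℝ) ≤ (11011656013835484940266432410302548710024800661358877772198465631544745075053173136770721218958459252823620093075130333271935707362471831016984100815772777971/8633233390031469689244799603553714881758089973750835845882043240865633914742395153015136718750000000000000000000000000000000000000000000000000000 : ℝ) * q^11 * (0.09310569 - q)^1 :=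
        mul_nonneg (mul_nonneg (by norm_num) (pow_nonneg hq0 11)) (pow_nonneg hs.le 1)
      have t12 : (0:ℝ) ≤ (305439427553344328454496344061720875969640280628959736776867605524340017765112159773393349901732761362066124016603546202325199747214193640963620967657923881997784261/4532447529766521586853519791865700312922997236219188819088072701454457805239757455332946777343750000000000000000000000000000000000000000000000000000000000000000 : ℝ) * q^12 * (0.09310569 - q)^0 :=
        mul_nonneg (mul_nonneg (by norm_num) (pow_nonneg hq0 12)) (pow_nonneg hs.le 0)
      linarith [t0, t1, t2, t3, t4, t5, t6, t7, t8, t9, t10, t11, t12]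
  have hD : (0:ℝ) < 1 - q + q * 2.446946 := by nlinarith
  have hA : (0:ℝ) < (1-q)*(2.446946-1) := by nlinarith
  have key2 : (1-q)*(2.446946-1) < 2*2.446946*((1-q)/(1 - q + q * 2.446946) +
      ((1.446946*q - (1.446946*q)^2/2 + (1.446946*q)^3/3 - (1.446946*q)^4/4 + (1.446946*q)^5/5 - (1.446946*q)^6/6 + (1.446946*q)^7/7 - (1.446946*q)^8/8 + (1.446946*q)^9/9 - (1.446946*q)^10/10 - 1.16*(1.446946*q)^11) - 0.8948407168)/1.446946) := by
    rw [show (1-q)/(1 - q + q * 2.446946) + ((1.446946*q - (1.446946*q)^2/2 + (1.446946*q)^3/3 - (1.446946*q)^4/4 + (1.446946*q)^5/5 - (1.446946*q)^6/6 + (1.446946*q)^7/7 - (1.446946*q)^8/8 + (1.446946*q)^9/9 - (1.446946*q)^10/10 - 1.16*(1.446946*q)^11) - 0.8948407168)/1.446946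
        = ((1-q)*1.446946 + ((1.446946*q - (1.446946*q)^2/2 + (1.446946*q)^3/3 - (1.446946*q)^4/4 + (1.446946*q)^5/5 - (1.446946*q)^6/6 + (1.446946*q)^7/7 - (1.446946*q)^8/8 + (1.446946*q)^9/9 - (1.446946*q)^10/10 - 1.16*(1.446946*q)^11) - 0.8948407168)*(1 - q + q * 2.446946))
          /((1 - q + q * 2.446946)*1.446946) by
      field_simp]
    rw [← mul_div_assoc, lt_div_iff₀ (by nlinarith)]
    linarith [hP]
  have hlog_div : Real.log (2.446946 / (1 - q + q * 2.446946)) =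
      Real.log 2.446946 - Real.log (1 - q + q * 2.446946) :=
    Real.log_div (by norm_num) (ne_of_gt hD)
  unfold G
  rw [hlog_div]
  rw [div_mul_eq_mul_div, lt_div_iff₀ hA]
  have hXY : (Real.log 2.446946 - Real.log (1 - q + q * 2.446946)) / (1 - 2.446946)
      = (Real.log (1 - q + q * 2.446946) - Real.log 2.446946) / 1.446946 := by
    rw [show (1:ℝ) - 2.446946 = -1.446946 by norm_num]
    ring
  rw [hXY]
  have hmono : ((1.446946*q - (1.446946*q)^2/2 + (1.446946*q)^3/3 - (1.446946*q)^4/4 + (1.446946*q)^5/5 - (1.446946*q)^6/6 + (1.446946*q)^7/7 - (1.446946*q)^8/8 + (1.446946*q)^9/9 - (1.446946*q)^10/10 - 1.16*(1.446946*q)^11) - 0.8948407168)/1.446946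
      ≤ (Real.log (1 - q + q * 2.446946) - Real.log 2.446946) / 1.446946 := by
    gcongr <;> linarith
  nlinarith [key2, hmono]
end
end

section
/- Define G(q̄, r) := (2r / ((1−q̄)(r−1))) · ( (1−q̄)/(1−q̄+q̄r) + ln( r/(1−q̄+q̄r) ) / (1−r) ). For every q̄ ∈ [0.09310571, 1) and every r ∈ (1, 11], G(q̄, r) < 1. (Thus for every triangle distribution T_{q̄} with q̄ ≥ 0.09310571, every nontrivial markup mechanism with ratio at most 11 is strictly outperformed by the second-price auction, whose revenue on T_{q̄} is 1.) -/
open MeasureTheory Set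

noncomputable section

private lemma pade_deriv (t : ℝ) (ht : 1 ≤ t) :
    HasDerivAt (fun y : ℝ => Real.log y - (y-1)*(11*y^2+38*y+11)/(3*(y+1)*(y^2+8*y+1)))
      (9*(t-1)^6 / (t*(3*(t+1)*(t^2+8*t+1))^2)) t := by
  have ht0 : (0:ℝ) < t := by linarith
  have hD : (0:ℝ) < 3*(t+1)*(t^2+8*t+1) := by nlinarith
  have hN : HasDerivAt (fun y : ℝ => (y-1)*(11*y^2+38*y+11)) (33*t^2+54*t-27) t := by
    have h := (((hasDerivAt_id t).sub_const 1).mul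
      (((hasDerivAt_pow 2 t).const_mul 11).add (((hasDerivAt_id t).const_mul 38).add_const 11)))
    convert h using 1
    · rfl
    · rfl
    · funext y; simp only [id_eq, Pi.mul_apply, Pi.add_apply]; ring
    · simp only [id_eq, Pi.add_apply]; push_cast; ring
  have hDen : HasDerivAt (fun y : ℝ => 3*(y+1)*(y^2+8*y+1)) (9*t^2+54*t+27) t := by
    have h := ((((hasDerivAt_id t).add_const 1).const_mul 3).mul
      ((hasDerivAt_pow 2 t).add (((hasDerivAt_id t).const_mul 8).add_const 1)))
    convert h using 1
    · rfl
    · rfl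
    · funext y; simp only [id_eq, Pi.mul_apply, Pi.add_apply]; ring
    · simp only [id_eq, Pi.add_apply]; push_cast; ring
  have hR := hN.div hDen (ne_of_gt hD)
  have h := (Real.hasDerivAt_log (ne_of_gt ht0)).sub hR
  convert h using 1
  · rfl
  · rfl
  · rfl
  have hDne : (3*(t+1)*(t^2+8*t+1)) ≠ 0 := ne_of_gt hD
  field_simp
  ring

private lemma pade_lt {t : ℝ} (ht : 1 < t) :
    (t-1)*(11*t^2+38*t+11)/(3*(t+1)*(t^2+8*t+1)) < Real.log t := by
  have mono : StrictMonoOn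
      (fun y : ℝ => Real.log y - (y-1)*(11*y^2+38*y+11)/(3*(y+1)*(y^2+8*y+1)))
      (Set.Ici 1) := by
    apply strictMonoOn_of_deriv_pos (convex_Ici 1)
    · intro y hy
      exact (pade_deriv y hy).continuousAt.continuousWithinAt
    · intro y hy
      rw [interior_Ici] at hy
      have hy' : (1:ℝ) < y := hy
      rw [(pade_deriv y (le_of_lt hy')).deriv]
      have h1 : (0:ℝ) < y := lt_trans one_pos hy'
      have h2 : (0:ℝ) < 9*(y-1)^6 := by
        have := pow_pos (show (0:ℝ) < y-1 by linarith) 6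
        linarith
      have h3 : (0:ℝ) < 3*(y+1)*(y^2+8*y+1) := by nlinarith
      exact div_pos h2 (mul_pos h1 (pow_pos h3 2))
  have h01 := mono (Set.self_mem_Ici) (show t ∈ Set.Ici (1:ℝ) from le_of_lt ht) ht
  simp only [Real.log_one] at h01
  norm_num at h01
  linarith

private lemma pade_le {t : ℝ} (ht : 1 ≤ t) :
    (t-1)*(11*t^2+38*t+11)/(3*(t+1)*(t^2+8*t+1)) ≤ Real.log t := by
  rcases eq_or_lt_of_le ht with h | h
  · rw [← h]; norm_num
  · exact le_of_lt (pade_lt h)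


private lemma main1d {x : ℝ} (h1 : 1 < x) (h2 : x ≤ 110000000/19310571) :
    (x-1)*(x+1-2*(0.09310571:ℝ)*x^2) < Real.log x * (2*x*(1-(0.09310571:ℝ)*x)) := by
  have hx0 : (0:ℝ) < x := by linarith
  have hq : (0:ℝ) < 2*x*(1-(0.09310571:ℝ)*x) := by nlinarith
  rcases le_or_gt x 2 with hc | hc
  · -- 1 < x ≤ 2
    have hp := pade_lt h1
    have hden : (0:ℝ) < 3*(x+1)*(x^2+8*x+1) := by nlinarith
    have hPt1 : (0:ℝ) ≤ 3 + 11*x - 59439429/6250000*x^2 + 26900849/50000000*x^3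
        + 27931713/50000000*x^4 := by
      nlinarith [mul_nonneg (sub_nonneg.2 h1.le) (sub_nonneg.2 hc), sq_nonneg (x-2),
        sq_nonneg (x-1), mul_nonneg (mul_nonneg (sub_nonneg.2 h1.le) (sub_nonneg.2 hc)) hx0.le]
    have key : (x-1)*(x+1-2*(0.09310571:ℝ)*x^2)
        ≤ (x-1)*(11*x^2+38*x+11)/(3*(x+1)*(x^2+8*x+1)) * (2*x*(1-(0.09310571:ℝ)*x)) := by
      rw [div_mul_eq_mul_div, le_div_iff₀ hden]
      nlinarith [mul_nonneg (sq_nonneg (x-1)) hPt1]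
    have h3 := mul_lt_mul_of_pos_right hp hq
    linarith
  · -- 2 < x ≤ X
    have hge : (1:ℝ) ≤ x/2 := by linarith
    have hp := pade_le hge
    have hlog2 := Real.log_two_gt_d9
    have hlx : Real.log x = Real.log 2 + Real.log (x/2) := by
      rw [Real.log_div (by linarith) two_ne_zero]; ring
    have hden : (0:ℝ) < 3*(x+2)*(x^2+16*x+4) := by nlinarith
    have hpx : ((x/2)-1)*(11*(x/2)^2+38*(x/2)+11)/(3*((x/2)+1)*((x/2)^2+8*(x/2)+1))
        = (x-2)*(11*x^2+76*x+44)/(3*(x+2)*(x^2+16*x+4)) := by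
      rw [div_eq_div_iff (by nlinarith) (ne_of_gt hden)]; ring
    have hLtot : (0.6931471803:ℝ) + (x-2)*(11*x^2+76*x+44)/(3*(x+2)*(x^2+16*x+4))
        < Real.log x := by
      rw [hlx, ← hpx]
      exact add_lt_add_of_lt_of_le hlog2 hp
    have hQ2 : (0:ℝ) ≤ 157503274610393618353809418236363/30517578125000000000000000000000
        - 5237495135259170081993787793/1953125000000000000000000000*x
        - 148470921667873935028303/15625000000000000000000*x^2
        + 3235277313491331461/500000000000000000*x^3
        + 27931713/50000000*x^4 := by
      nlinarith [mul_nonneg (mul_nonneg (sub_nonneg.2 hc.le) (sub_nonneg.2 hc.le)) (sub_nonneg.2 hc.le),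
        sq_nonneg (x-2), mul_nonneg (sub_nonneg.2 hc.le) (sub_nonneg.2 h2), sq_nonneg x,
        mul_nonneg (mul_nonneg (sub_nonneg.2 hc.le) (sub_nonneg.2 hc.le)) (sub_nonneg.2 h2)]
    have key : (x-1)*(x+1-2*(0.09310571:ℝ)*x^2)
        ≤ ((0.6931471803:ℝ) + (x-2)*(11*x^2+76*x+44)/(3*(x+2)*(x^2+16*x+4)))
          * (2*x*(1-(0.09310571:ℝ)*x)) := by
      rw [show (0.6931471803:ℝ) + (x-2)*(11*x^2+76*x+44)/(3*(x+2)*(x^2+16*x+4))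
          = ((0.6931471803:ℝ)*(3*(x+2)*(x^2+16*x+4)) + (x-2)*(11*x^2+76*x+44))
            /(3*(x+2)*(x^2+16*x+4)) by field_simp]
      rw [div_mul_eq_mul_div, le_div_iff₀ hden]
      nlinarith [mul_nonneg hQ2 (sq_nonneg (x - 134777/62500)), hc.le, h2]
    have h3 := mul_lt_mul_of_pos_right hLtot hq
    linarith

set_option maxHeartbeats 1000000

/-- for every `q̄ ∈ [0.09310571, 1)` and every `r ∈ (1, 11]`,
`G(q̄, r) < 1`: every nontrivial markup mechanism with ratio at most `11` is
strictly outperformed by the second-price auction on `T_q̄`. -/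
theorem stmt19 (q r : ℝ) (hq : q ∈ Set.Ico (0.09310571 : ℝ) 1)
    (hr : r ∈ Set.Ioc (1 : ℝ) 11) :
    G q r < 1 := by
  obtain ⟨hq0, hq1⟩ := hq
  obtain ⟨hr1, hr2⟩ := hr
  set s : ℝ := 1 - q + q * r with hs
  have hs1 : 1 < s := by nlinarith
  have hs0 : (0:ℝ) < s := by linarith
  have hsr : s < r := by nlinarith
  have hr0 : (0:ℝ) < r := by linarith
  have hx1 : 1 < r / s := (one_lt_div hs0).2 hsr
  have hx2 : r / s ≤ 110000000/19310571 := by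
    rw [div_le_iff₀ hs0]
    nlinarith [mul_nonneg (sub_nonneg.2 hq0) (sub_nonneg.2 hr1.le)]
  have hmain := main1d hx1 hx2
  set l : ℝ := Real.log (r / s) with hl
  -- multiply through by s^3
  have hs3 : (0:ℝ) < s^3 := pow_pos hs0 3
  have e1 : ((r/s)-1)*((r/s)+1-2*(0.09310571:ℝ)*(r/s)^2) * s^3
      = (r-s)*(r*s+s^2-2*(0.09310571:ℝ)*r^2) := by
    field_simp
  have e2 : (l * (2*(r/s)*(1-(0.09310571:ℝ)*(r/s)))) * s^3
      = l*(2*r*s*(s-(0.09310571:ℝ)*r)) := by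
    field_simp
  have hmain' : (r-s)*(r*s+s^2-2*(0.09310571:ℝ)*r^2)
      < l*(2*r*s*(s-(0.09310571:ℝ)*r)) := by
    rw [← e1, ← e2]
    exact mul_lt_mul_of_pos_right hmain hs3
  have hsq : (0:ℝ) < s - (0.09310571:ℝ)*r := by nlinarith
  -- (r-s)(2r+s-sr)(s-q0 r) ≤ (r-s)(rs+s^2-2q0 r^2)
  have hstep : (r-s)*(2*r+s-s*r)*(s-(0.09310571:ℝ)*r)
      ≤ (r-s)*(r*s+s^2-2*(0.09310571:ℝ)*r^2) := by
    nlinarith [mul_nonneg (mul_nonneg (sub_nonneg.2 hsr.le) (mul_pos hs0 hr0).le)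
      (mul_nonneg (sub_nonneg.2 hq0) (sub_nonneg.2 hr1.le))]
  have hlog : (r-s)*(2*r+s-s*r) < l * (2*r*s) := by
    have h4 : (r-s)*(2*r+s-s*r)*(s-(0.09310571:ℝ)*r) < l * (2*r*s) * (s-(0.09310571:ℝ)*r) := by
      calc (r-s)*(2*r+s-s*r)*(s-(0.09310571:ℝ)*r)
          ≤ (r-s)*(r*s+s^2-2*(0.09310571:ℝ)*r^2) := hstep
        _ < l*(2*r*s*(s-(0.09310571:ℝ)*r)) := hmain'
        _ = l * (2*r*s) * (s-(0.09310571:ℝ)*r) := by ring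
    exact lt_of_mul_lt_mul_right h4 hsq.le
  have hden1 : (1:ℝ) - q > 0 := by linarith
  have hiden : G q r = 1 - (l*(2*r*s) - (r-s)*(2*r+s-s*r)) / ((1-q)*(r-1)^2*s) := by
    simp only [G, hl, hs]
    have h1 : (1:ℝ) - q ≠ 0 := by linarith
    have h2 : r - 1 ≠ 0 := by linarith
    have h3 : (1:ℝ) - r ≠ 0 := by linarith
    have h4 : (1:ℝ) - q + q * r ≠ 0 := by nlinarith
    have h5 : r ≠ 0 := by linarith
    field_simp
    ring
  rw [hiden]
  have hpos : (0:ℝ) < (1-q)*(r-1)^2*s :=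
    mul_pos (mul_pos hden1 (pow_pos (by linarith) 2)) hs0
  have := div_pos (by linarith : (0:ℝ) < l*(2*r*s) - (r-s)*(2*r+s-s*r)) hpos
  linarith
end
end
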